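/- arXiv:2605.01090 — 9 statements merged into one kernel-verified Lean document; each statement's English description precedes it below -/
import Mathlib

section
/- For every m ≥ 1, V(ξ m) ≤ q^m·V(ξ 0) + a4·∑_{j=0}^{m−1} q^{m−1−j}·‖w j‖², where ā3 := min(a3, a2/2) and q := 1 − ā3/a2. -/
lemma apid_aux (q : ℝ) (hq0 : 0 ≤ q) (v u : ℕ → ℝ)
    (hstep : ∀ m, v (m + 1) ≤ q * v m + u m) :
    ∀ m, v m ≤ q ^ m * v 0 + ∑ j ∈ Finset.range m, q ^ (m - 1 - j) * u j := by
  intro m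
  induction m with
  | zero => simp
  | succ n ih =>
    have h1 : v (n + 1) ≤ q * (q ^ n * v 0
        + ∑ j ∈ Finset.range n, q ^ (n - 1 - j) * u j) + u n := by
      have := mul_le_mul_of_nonneg_left ih hq0
      have h := hstep n
      linarith
    have hsum : q * ∑ j ∈ Finset.range n, q ^ (n - 1 - j) * u j
        = ∑ j ∈ Finset.range n, q ^ (n + 1 - 1 - j) * u j := by
      rw [Finset.mul_sum]
      apply Finset.sum_congr rfl
      intro j hj
      have hj' : j < n := Finset.mem_range.mp hj
      have he : n + 1 - 1 - j = (n - 1 - j) + 1 := by omega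
      rw [he, pow_succ]; ring
    calc v (n + 1) ≤ q * (q ^ n * v 0
          + ∑ j ∈ Finset.range n, q ^ (n - 1 - j) * u j) + u n := h1
      _ = q ^ (n + 1) * v 0
          + (q * ∑ j ∈ Finset.range n, q ^ (n - 1 - j) * u j + u n) := by ring
      _ = q ^ (n + 1) * v 0
          + (∑ j ∈ Finset.range n, q ^ (n + 1 - 1 - j) * u j
            + q ^ (n + 1 - 1 - n) * u n) := by rw [hsum]; simp
      _ = _ := by rw [Finset.sum_range_succ]

/-- Iterated Lyapunov estimate for the sampled APID closed loop:
`V(ξ m) ≤ q^m·V(ξ 0) + a4·∑_{j=0}^{m-1} q^(m-1-j)·‖w j‖²`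
with `ā3 := min(a3, a2/2)`, `q := 1 - ā3/a2`. -/
theorem apid_iterated_estimate
    {E F : Type*} [NormedAddCommGroup E] [NormedSpace ℝ E]
    [NormedAddCommGroup F] [NormedSpace ℝ F]
    (ξ : ℕ → E) (w : ℕ → F) (V : E → ℝ) (a1 a2 a3 a4 : ℝ)
    (ha1 : 0 < a1) (ha2 : 0 < a2) (ha3 : 0 < a3) (ha4 : 0 < a4)
    (hlow : ∀ m, a1 * ‖ξ m‖ ^ 2 ≤ V (ξ m))
    (hup : ∀ m, V (ξ m) ≤ a2 * ‖ξ m‖ ^ 2)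
    (hdec : ∀ m, V (ξ (m + 1)) - V (ξ m) ≤ -a3 * ‖ξ m‖ ^ 2 + a4 * ‖w m‖ ^ 2) :
    ∀ m, 1 ≤ m →
      V (ξ m) ≤ (1 - min a3 (a2 / 2) / a2) ^ m * V (ξ 0)
        + a4 * ∑ j ∈ Finset.range m,
            (1 - min a3 (a2 / 2) / a2) ^ (m - 1 - j) * ‖w j‖ ^ 2 := by
  have hmin1 : min a3 (a2 / 2) ≤ a3 := min_le_left _ _
  have hmin2 : min a3 (a2 / 2) ≤ a2 / 2 := min_le_right _ _
  have hminpos : 0 < min a3 (a2 / 2) := lt_min ha3 (by linarith)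
  have hq0 : 0 ≤ 1 - min a3 (a2 / 2) / a2 := by
    have : min a3 (a2 / 2) / a2 ≤ 1 := by
      rw [div_le_one ha2]; linarith
    linarith
  have hstep : ∀ m, V (ξ (m + 1))
      ≤ (1 - min a3 (a2 / 2) / a2) * V (ξ m) + a4 * ‖w m‖ ^ 2 := by
    intro m
    have h1 := hdec m
    have hsq : (0:ℝ) ≤ ‖ξ m‖ ^ 2 := sq_nonneg _
    have h2 : min a3 (a2 / 2) / a2 * V (ξ m) ≤ a3 * ‖ξ m‖ ^ 2 := by
      have h3 : min a3 (a2 / 2) / a2 * V (ξ m)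
          ≤ min a3 (a2 / 2) / a2 * (a2 * ‖ξ m‖ ^ 2) :=
        mul_le_mul_of_nonneg_left (hup m) (by positivity)
      have h4 : min a3 (a2 / 2) / a2 * (a2 * ‖ξ m‖ ^ 2)
          = min a3 (a2 / 2) * ‖ξ m‖ ^ 2 := by
        field_simp
      nlinarith [mul_le_mul_of_nonneg_right hmin1 hsq]
    nlinarith
  intro m _
  have := apid_aux (1 - min a3 (a2 / 2) / a2) hq0 (fun n => V (ξ n))
    (fun n => a4 * ‖w n‖ ^ 2) hstep m
  calc V (ξ m) ≤ _ := this
    _ = (1 - min a3 (a2 / 2) / a2) ^ m * V (ξ 0)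
        + a4 * ∑ j ∈ Finset.range m,
            (1 - min a3 (a2 / 2) / a2) ^ (m - 1 - j) * ‖w j‖ ^ 2 := by
      rw [Finset.mul_sum]
      congr 1
      apply Finset.sum_congr rfl
      intro j _
      ring
end

section
/- For every m ≥ 1, V(ξ m) ≤ q^m·V(ξ 0) + (a4·a2/ā3)·sup_{0 ≤ j ≤ m−1} ‖w j‖², where ā3 := min(a3, a2/2) and q := 1 − ā3/a2. -/
/-- Geometric-sum Lyapunov estimate for the sampled APID closed loop:
`V(ξ m) ≤ q^m·V(ξ 0) + (a4·a2/ā3)·sup_{0 ≤ j ≤ m-1} ‖w j‖²`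
with `ā3 := min(a3, a2/2)`, `q := 1 - ā3/a2`. -/
theorem apid_sup_estimate
    {E F : Type*} [NormedAddCommGroup E] [NormedSpace ℝ E]
    [NormedAddCommGroup F] [NormedSpace ℝ F]
    (ξ : ℕ → E) (w : ℕ → F) (V : E → ℝ) (a1 a2 a3 a4 : ℝ)
    (ha1 : 0 < a1) (ha2 : 0 < a2) (ha3 : 0 < a3) (ha4 : 0 < a4)
    (hlow : ∀ m, a1 * ‖ξ m‖ ^ 2 ≤ V (ξ m))
    (hup : ∀ m, V (ξ m) ≤ a2 * ‖ξ m‖ ^ 2)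
    (hdec : ∀ m, V (ξ (m + 1)) - V (ξ m) ≤ -a3 * ‖ξ m‖ ^ 2 + a4 * ‖w m‖ ^ 2) :
    ∀ m, (hm : 1 ≤ m) →
      V (ξ m) ≤ (1 - min a3 (a2 / 2) / a2) ^ m * V (ξ 0)
        + a4 * a2 / min a3 (a2 / 2)
            * (Finset.range m).sup'
                (Finset.nonempty_range_iff.mpr (Nat.one_le_iff_ne_zero.mp hm))
                (fun j => ‖w j‖ ^ 2) := by
  set b := min a3 (a2 / 2) with hb
  have hb0 : 0 < b := lt_min ha3 (by linarith)
  have hba3 : b ≤ a3 := min_le_left _ _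
  have hba2 : b ≤ a2 := le_trans (min_le_right _ _) (by linarith)
  set q := 1 - b / a2 with hq
  have hq0 : 0 ≤ q := by
    have : b / a2 ≤ 1 := (div_le_one ha2).mpr hba2
    simp only [hq]; linarith
  set C := a4 * a2 / b with hC
  have hC0 : 0 < C := by positivity
  have hCa : C * (b / a2) = a4 := by
    field_simp [hC]
    rw [hC, div_mul_cancel₀ _ hb0.ne']; ring
  have hCq : q * C + a4 = C := by
    have : q * C = C - C * (b / a2) := by ring
    rw [this, hCa]; ring
  have ha4C : a4 ≤ C := by
    have h2 : 2 * b ≤ a2 := by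
      have := min_le_right a3 (a2 / 2); simp only [← hb] at this; linarith
    rw [hC, le_div_iff₀ hb0]; nlinarith
  have hkey : ∀ m, V (ξ (m + 1)) ≤ q * V (ξ m) + a4 * ‖w m‖ ^ 2 := by
    intro m
    have h1 := hdec m
    have h2 := hup m
    have h3 : b / a2 * V (ξ m) ≤ b * ‖ξ m‖ ^ 2 := by
      calc b / a2 * V (ξ m) ≤ b / a2 * (a2 * ‖ξ m‖ ^ 2) :=
            mul_le_mul_of_nonneg_left h2 (le_of_lt (div_pos hb0 ha2))
        _ = b * ‖ξ m‖ ^ 2 := by field_simp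
    have h4 : (0 : ℝ) ≤ ‖ξ m‖ ^ 2 := sq_nonneg _
    simp only [hq]; nlinarith
  intro m hm
  induction m with
  | zero => omega
  | succ n ih =>
    rcases Nat.eq_zero_or_pos n with hn0 | hn1
    · subst hn0
      have hsup : (Finset.range 1).sup'
          (Finset.nonempty_range_iff.mpr (Nat.one_le_iff_ne_zero.mp hm))
          (fun j => ‖w j‖ ^ 2) = ‖w 0‖ ^ 2 := by
        simp [Finset.range_one]
      rw [hsup, pow_one]
      have hw0 : (0 : ℝ) ≤ ‖w 0‖ ^ 2 := sq_nonneg _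
      have := hkey 0
      nlinarith
    · have IH := ih hn1
      have hne : (Finset.range n).Nonempty := Finset.nonempty_range_iff.mpr (by omega)
      set Sn := (Finset.range n).sup' hne (fun j => ‖w j‖ ^ 2) with hSn
      set S := (Finset.range (n + 1)).sup'
          (Finset.nonempty_range_iff.mpr (Nat.one_le_iff_ne_zero.mp hm))
          (fun j => ‖w j‖ ^ 2) with hS
      have hSnS : Sn ≤ S := by
        apply Finset.sup'_le
        intro j hj
        exact Finset.le_sup' (fun j => ‖w j‖ ^ 2) (Finset.mem_range.mpr
          (Nat.lt_succ_of_lt (Finset.mem_range.mp hj)))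
      have hwS : ‖w n‖ ^ 2 ≤ S :=
        Finset.le_sup' (fun j => ‖w j‖ ^ 2) (Finset.mem_range.mpr (Nat.lt_succ_self n))
      have hk := hkey n
      have hmul1 : q * V (ξ n) ≤ q * (q ^ n * V (ξ 0) + C * Sn) :=
        mul_le_mul_of_nonneg_left IH hq0
      have hmul2 : q * C * Sn ≤ q * C * S :=
        mul_le_mul_of_nonneg_left hSnS (mul_nonneg hq0 hC0.le)
      have hmul3 : a4 * ‖w n‖ ^ 2 ≤ a4 * S := mul_le_mul_of_nonneg_left hwS ha4.le
      calc V (ξ (n + 1)) ≤ q * V (ξ n) + a4 * ‖w n‖ ^ 2 := hk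
        _ ≤ q * (q ^ n * V (ξ 0) + C * Sn) + a4 * ‖w n‖ ^ 2 := by linarith
        _ = q ^ (n + 1) * V (ξ 0) + q * C * Sn + a4 * ‖w n‖ ^ 2 := by
            rw [pow_succ]; ring
        _ ≤ q ^ (n + 1) * V (ξ 0) + q * C * S + a4 * S := by linarith
        _ = q ^ (n + 1) * V (ξ 0) + (q * C + a4) * S := by ring
        _ = q ^ (n + 1) * V (ξ 0) + C * S := by rw [hCq]
end

section
/- (Theorem 1, ultimate boundedness.) If w̄ := sup_{j ∈ ℕ} ‖w j‖ is finite, then the sequence (ξ m) is uniformly ultimately bounded and limsup_{m→∞} ‖ξ m‖ ≤ √(a4·a2/(a1·ā3))·w̄, where ā3 := min(a3, a2/2). -/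
/-- Theorem 1 (ultimate boundedness for APID): if `w̄ := sup_j ‖w j‖` is finite,
then `ξ` is uniformly ultimately bounded and
`limsup_{m→∞} ‖ξ m‖ ≤ √(a4·a2/(a1·ā3))·w̄`, with `ā3 := min(a3, a2/2)`. -/
theorem apid_ultimate_bound
    {E F : Type*} [NormedAddCommGroup E] [NormedSpace ℝ E]
    [NormedAddCommGroup F] [NormedSpace ℝ F]
    (ξ : ℕ → E) (w : ℕ → F) (V : E → ℝ) (a1 a2 a3 a4 : ℝ)
    (ha1 : 0 < a1) (ha2 : 0 < a2) (ha3 : 0 < a3) (ha4 : 0 < a4)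
    (hlow : ∀ m, a1 * ‖ξ m‖ ^ 2 ≤ V (ξ m))
    (hup : ∀ m, V (ξ m) ≤ a2 * ‖ξ m‖ ^ 2)
    (hdec : ∀ m, V (ξ (m + 1)) - V (ξ m) ≤ -a3 * ‖ξ m‖ ^ 2 + a4 * ‖w m‖ ^ 2)
    (hwbdd : BddAbove (Set.range fun j => ‖w j‖)) :
    (∃ B : ℝ, ∀ᶠ m in Filter.atTop, ‖ξ m‖ ≤ B) ∧
      Filter.limsup (fun m => ‖ξ m‖) Filter.atTop
        ≤ Real.sqrt (a4 * a2 / (a1 * min a3 (a2 / 2))) * (⨆ j, ‖w j‖) := by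
  set b := min a3 (a2 / 2) with hbdef
  have hb : 0 < b := lt_min ha3 (by linarith)
  have hba2 : b ≤ a2 / 2 := min_le_right _ _
  have hba3 : b ≤ a3 := min_le_left _ _
  set wbar : ℝ := ⨆ j, ‖w j‖ with hwdef
  have hwle : ∀ j, ‖w j‖ ≤ wbar := fun j => le_ciSup hwbdd j
  have hw0 : 0 ≤ wbar := le_trans (norm_nonneg (w 0)) (hwle 0)
  set q : ℝ := 1 - b / a2 with hqdef
  have hq0 : 0 ≤ q := by
    have : b / a2 ≤ 1 / 2 := by
      rw [div_le_div_iff₀ ha2 (by norm_num)]; linarith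
    simp only [hqdef]; linarith
  have hq1 : q < 1 := by
    have : 0 < b / a2 := div_pos hb ha2
    simp only [hqdef]; linarith
  set c : ℝ := a4 * wbar ^ 2 with hcdef
  have hc : 0 ≤ c := mul_nonneg ha4.le (sq_nonneg _)
  have key : ∀ m, V (ξ (m + 1)) ≤ q * V (ξ m) + c := by
    intro m
    have h1 := hdec m
    have h2 := hup m
    have h3 : ‖w m‖ ^ 2 ≤ wbar ^ 2 :=
      pow_le_pow_left₀ (norm_nonneg _) (hwle m) 2
    have h4 : 0 ≤ ‖ξ m‖ ^ 2 := sq_nonneg _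
    have h5 : b * ‖ξ m‖ ^ 2 ≤ a3 * ‖ξ m‖ ^ 2 := mul_le_mul_of_nonneg_right hba3 h4
    have h6 : (b / a2) * V (ξ m) ≤ b * ‖ξ m‖ ^ 2 := by
      rw [div_mul_eq_mul_div, div_le_iff₀ ha2]
      calc b * V (ξ m) ≤ b * (a2 * ‖ξ m‖ ^ 2) := mul_le_mul_of_nonneg_left h2 hb.le
        _ = b * ‖ξ m‖ ^ 2 * a2 := by ring
    simp only [hqdef, hcdef]
    nlinarith
  have h1q : 1 - q = b / a2 := by simp [hqdef]
  clear_value q c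
  have hV0 : 0 ≤ V (ξ 0) := le_trans (mul_nonneg ha1.le (sq_nonneg _)) (hlow 0)
  have hVm : ∀ m, V (ξ m) ≤ q ^ m * V (ξ 0) + c / (1 - q) := by
    intro m
    induction m with
    | zero =>
      simp only [pow_zero, one_mul]
      have : 0 ≤ c / (1 - q) := div_nonneg hc (by linarith)
      linarith
    | succ n ih =>
      calc V (ξ (n + 1)) ≤ q * V (ξ n) + c := key n
        _ ≤ q * (q ^ n * V (ξ 0) + c / (1 - q)) + c :=
            by nlinarith [mul_le_mul_of_nonneg_left ih hq0]
        _ = q ^ (n + 1) * V (ξ 0) + (q * (c / (1 - q)) + c) := by ring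
        _ = q ^ (n + 1) * V (ξ 0) + c / (1 - q) := by
            have hne : (1:ℝ) - q ≠ 0 := by linarith
            field_simp
            ring
  have hK : c / (1 - q) / a1 = a4 * a2 / (a1 * b) * wbar ^ 2 := by
    rw [h1q, hcdef]
    field_simp
  -- the bounding sequence
  set g : ℕ → ℝ := fun m => Real.sqrt (q ^ m * V (ξ 0) / a1 + a4 * a2 / (a1 * b) * wbar ^ 2)
    with hgdef
  have hbound : ∀ m, ‖ξ m‖ ≤ g m := by
    intro m
    have h1 : a1 * ‖ξ m‖ ^ 2 ≤ q ^ m * V (ξ 0) + c / (1 - q) := le_trans (hlow m) (hVm m)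
    have h2 : ‖ξ m‖ ^ 2 ≤ q ^ m * V (ξ 0) / a1 + a4 * a2 / (a1 * b) * wbar ^ 2 := by
      rw [← hK]
      rw [← add_div, le_div_iff₀ ha1]
      linarith [mul_comm a1 (‖ξ m‖ ^ 2)]
    have := Real.sqrt_le_sqrt h2
    rwa [Real.sqrt_sq_eq_abs, abs_of_nonneg (norm_nonneg _)] at this
  set L : ℝ := Real.sqrt (a4 * a2 / (a1 * b)) * wbar with hLdef
  have hL : Real.sqrt (a4 * a2 / (a1 * b) * wbar ^ 2) = L := by
    rw [hLdef, Real.sqrt_mul (by positivity), Real.sqrt_sq hw0]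
  have hgL : Filter.Tendsto g Filter.atTop (nhds L) := by
    rw [← hL]
    apply (Real.continuous_sqrt.tendsto _).comp
    have h1 : Filter.Tendsto (fun m : ℕ => q ^ m) Filter.atTop (nhds 0) :=
      tendsto_pow_atTop_nhds_zero_of_lt_one hq0 hq1
    have h2 : Filter.Tendsto (fun m : ℕ => q ^ m * V (ξ 0) / a1 + a4 * a2 / (a1 * b) * wbar ^ 2)
        Filter.atTop (nhds (0 * V (ξ 0) / a1 + a4 * a2 / (a1 * b) * wbar ^ 2)) := by
      exact (((h1.mul_const _).div_const _).add_const _)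
    simpa using h2
  constructor
  · -- boundedness
    obtain ⟨B, hB⟩ := hgL.isBoundedUnder_le
    rw [Filter.eventually_map] at hB
    exact ⟨B, hB.mono fun m hm => le_trans (hbound m) hm⟩
  · have hlim : Filter.limsup g Filter.atTop = L := hgL.limsup_eq
    have hmono : Filter.limsup (fun m => ‖ξ m‖) Filter.atTop ≤ Filter.limsup g Filter.atTop := by
      exact Filter.limsup_le_limsup (Filter.Eventually.of_forall hbound)
        (Filter.IsBoundedUnder.isCoboundedUnder_le
          ⟨0, Filter.eventually_map.mpr (Filter.Eventually.of_forall fun m => norm_nonneg (ξ m))⟩)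
        hgL.isBoundedUnder_le
    rw [hlim] at hmono
    exact hmono
end

section
/- (Theorem 1, tracking-error bound.) Under the stated assumptions, limsup_{m→∞} |e m| ≤ (L_h·√(a4·a2/(a1·ā3)) + 1)·w̄, where ā3 := min(a3, a2/2); in particular the sampled tracking error is ultimately bounded by a disturbance-dependent constant c_e·w̄ with c_e := L_h·√(a4·a2/(a1·ā3)) + 1 > 0. -/
/-- Theorem 1 (tracking-error bound for APID): with sampled tracking error
`e m := h(y*) − h(y m) − η m`, one has
`limsup_{m→∞} |e m| ≤ (L_h·√(a4·a2/(a1·ā3)) + 1)·w̄`, where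
`ā3 := min(a3, a2/2)` and `w̄ := ⨆ j, ‖w j‖`; that is, the sampled tracking
error is ultimately bounded by `c_e·w̄` with
`c_e := L_h·√(a4·a2/(a1·ā3)) + 1 > 0`. -/
theorem apid_tracking_error_bound
    {E F Y : Type*} [NormedAddCommGroup E] [NormedSpace ℝ E]
    [NormedAddCommGroup F] [NormedSpace ℝ F]
    [NormedAddCommGroup Y] [NormedSpace ℝ Y]
    (ξ : ℕ → E) (w : ℕ → F) (V : E → ℝ) (a1 a2 a3 a4 : ℝ)
    (ha1 : 0 < a1) (ha2 : 0 < a2) (ha3 : 0 < a3) (ha4 : 0 < a4)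
    (hlow : ∀ m, a1 * ‖ξ m‖ ^ 2 ≤ V (ξ m))
    (hup : ∀ m, V (ξ m) ≤ a2 * ‖ξ m‖ ^ 2)
    (hdec : ∀ m, V (ξ (m + 1)) - V (ξ m) ≤ -a3 * ‖ξ m‖ ^ 2 + a4 * ‖w m‖ ^ 2)
    (h : Y → ℝ) (y : ℕ → Y) (ystar : Y) (η : ℕ → ℝ) (e : ℕ → ℝ)
    (he : ∀ m, e m = h ystar - h (y m) - η m)
    (Lh : ℝ) (hLh : 0 < Lh)
    (hLip : ∀ m, |h (y m) - h ystar| ≤ Lh * ‖y m - ystar‖)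
    (hcomp : ∀ m, ‖y m - ystar‖ ≤ ‖ξ m‖)
    (hnoise : ∀ m, |η m| ≤ ‖w m‖)
    (hwbdd : BddAbove (Set.range fun j => ‖w j‖)) :
    Filter.limsup (fun m => |e m|) Filter.atTop
      ≤ (Lh * Real.sqrt (a4 * a2 / (a1 * min a3 (a2 / 2))) + 1) * (⨆ j, ‖w j‖) := by
  set wb : ℝ := ⨆ j, ‖w j‖ with hwb
  have hwle : ∀ j, ‖w j‖ ≤ wb := fun j => le_ciSup hwbdd j
  have hwbnn : 0 ≤ wb := le_trans (norm_nonneg (w 0)) (hwle 0)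
  set a3' : ℝ := min a3 (a2 / 2) with ha3'
  have ha3'pos : 0 < a3' := lt_min ha3 (by linarith)
  have ha3'le : a3' ≤ a2 / 2 := min_le_right _ _
  set ρ : ℝ := a3' / a2 with hρ
  have hρpos : 0 < ρ := div_pos ha3'pos ha2
  have hρle : ρ ≤ 1 / 2 := by
    rw [hρ, div_le_iff₀ ha2]; linarith
  set C : ℝ := a4 * wb ^ 2 with hC
  set B : ℝ := C / ρ with hB
  have hBnn : 0 ≤ B := div_nonneg (by positivity) hρpos.le
  -- one-step contraction
  have hstep : ∀ m, V (ξ (m + 1)) ≤ (1 - ρ) * V (ξ m) + C := by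
    intro m
    have h1 := hdec m
    have h2 := hup m
    have h3 : a4 * ‖w m‖ ^ 2 ≤ C := by
      rw [hC]
      exact mul_le_mul_of_nonneg_left
        (pow_le_pow_left₀ (norm_nonneg _) (hwle m) 2) ha4.le
    have h4 : ρ * V (ξ m) ≤ a3' * ‖ξ m‖ ^ 2 := by
      have : ρ * V (ξ m) ≤ ρ * (a2 * ‖ξ m‖ ^ 2) := by
        exact mul_le_mul_of_nonneg_left h2 hρpos.le
      calc ρ * V (ξ m) ≤ ρ * (a2 * ‖ξ m‖ ^ 2) := this
        _ = a3' * ‖ξ m‖ ^ 2 := by rw [hρ]; field_simp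
    have h5 : a3' * ‖ξ m‖ ^ 2 ≤ a3 * ‖ξ m‖ ^ 2 :=
      mul_le_mul_of_nonneg_right (min_le_left _ _) (by positivity)
    nlinarith
  -- iterate
  have hiter : ∀ m, V (ξ m) ≤ (1 - ρ) ^ m * V (ξ 0) + B := by
    intro m
    induction m with
    | zero => simpa using hBnn
    | succ n ih =>
      have h1 := hstep n
      have h1ρ : (0:ℝ) ≤ 1 - ρ := by linarith
      have h2 : (1 - ρ) * V (ξ n) ≤ (1 - ρ) * ((1 - ρ) ^ n * V (ξ 0) + B) :=
        mul_le_mul_of_nonneg_left ih h1ρ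
      have hCB : (1 - ρ) * B + C = B := by
        rw [hB]; field_simp; ring
      calc V (ξ (n + 1)) ≤ (1 - ρ) * V (ξ n) + C := h1
        _ ≤ (1 - ρ) * ((1 - ρ) ^ n * V (ξ 0) + B) + C := by linarith
        _ = (1 - ρ) ^ (n + 1) * V (ξ 0) + ((1 - ρ) * B + C) := by ring
        _ = (1 - ρ) ^ (n + 1) * V (ξ 0) + B := by rw [hCB]
  -- pointwise bound on |e m|
  set g : ℕ → ℝ := fun m =>
    Lh * Real.sqrt (((1 - ρ) ^ m * V (ξ 0) + B) / a1) + wb with hg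
  have hbound : ∀ m, |e m| ≤ g m := by
    intro m
    have hξ2 : ‖ξ m‖ ^ 2 ≤ ((1 - ρ) ^ m * V (ξ 0) + B) / a1 := by
      rw [le_div_iff₀ ha1]
      have := hlow m
      have := hiter m
      nlinarith
    have hξ : ‖ξ m‖ ≤ Real.sqrt (((1 - ρ) ^ m * V (ξ 0) + B) / a1) := by
      have := Real.sqrt_le_sqrt hξ2
      rwa [Real.sqrt_sq (norm_nonneg _)] at this
    have h1 : |e m| ≤ |h (y m) - h ystar| + |η m| := by
      rw [he m]
      calc |h ystar - h (y m) - η m| ≤ |h ystar - h (y m)| + |η m| := abs_sub _ _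
        _ = |h (y m) - h ystar| + |η m| := by rw [abs_sub_comm]
    have h2 : |h (y m) - h ystar| ≤ Lh * Real.sqrt (((1 - ρ) ^ m * V (ξ 0) + B) / a1) :=
      le_trans (hLip m) (by
        exact mul_le_mul_of_nonneg_left (le_trans (hcomp m) hξ) hLh.le)
    have h3 : |η m| ≤ wb := le_trans (hnoise m) (hwle m)
    calc |e m| ≤ |h (y m) - h ystar| + |η m| := h1
      _ ≤ g m := by rw [hg]; dsimp; linarith
  -- limit of g
  have hlim : Filter.Tendsto g Filter.atTop (nhds (Lh * Real.sqrt (B / a1) + wb)) := by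
    have h0 : Filter.Tendsto (fun m : ℕ => (1 - ρ) ^ m) Filter.atTop (nhds 0) := by
      apply tendsto_pow_atTop_nhds_zero_of_abs_lt_one
      rw [abs_lt]; constructor <;> linarith
    have h1 : Filter.Tendsto (fun m : ℕ => ((1 - ρ) ^ m * V (ξ 0) + B) / a1)
        Filter.atTop (nhds (B / a1)) := by
      have := ((h0.mul_const (V (ξ 0))).add_const B).div_const a1
      simpa using this
    have h2 := (h1.sqrt.const_mul Lh).add_const wb
    simpa [hg] using h2
  -- limsup comparison
  have hL : Lh * Real.sqrt (B / a1) + wb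
      = (Lh * Real.sqrt (a4 * a2 / (a1 * a3')) + 1) * wb := by
    have hsq : Real.sqrt (B / a1) = Real.sqrt (a4 * a2 / (a1 * a3')) * wb := by
      have hBeq : B / a1 = a4 * a2 / (a1 * a3') * wb ^ 2 := by
        rw [hB, hC, hρ]; field_simp
      rw [hBeq, Real.sqrt_mul (by positivity), Real.sqrt_sq hwbnn]
    rw [hsq]; ring
  have hlimsup_g : Filter.limsup g Filter.atTop = Lh * Real.sqrt (B / a1) + wb :=
    hlim.limsup_eq
  have hcobdd : Filter.IsCoboundedUnder (· ≤ ·) Filter.atTop (fun m => |e m|) :=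
    Filter.isCoboundedUnder_le_of_le Filter.atTop (fun m => abs_nonneg (e m))
  have hbddg : Filter.IsBoundedUnder (· ≤ ·) Filter.atTop g :=
    hlim.isBoundedUnder_le
  calc Filter.limsup (fun m => |e m|) Filter.atTop
      ≤ Filter.limsup g Filter.atTop :=
        Filter.limsup_le_limsup (Filter.Eventually.of_forall hbound) hcobdd hbddg
    _ = Lh * Real.sqrt (B / a1) + wb := hlimsup_g
    _ = (Lh * Real.sqrt (a4 * a2 / (a1 * a3')) + 1) * wb := hL
end

section
/- (Projected gain-update descent.) There exist σ_φ ∈ (0,1) and c_r > 0 such that for all m ∈ ℕ: ‖φ(m+1) − φ*‖² − ‖φ m − φ*‖² ≤ −σ_φ·‖φ m − φ*‖² + c_r·‖r m‖². -/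
set_option maxHeartbeats 1000000


/-- Projected gain-update descent for RAPID: under the local risk-gradient
conditions and admissible step sizes, the projected update
`φ(m+1) = Π_Φ(φ m − α m·(g m + r m))` satisfies, for some `σ_φ ∈ (0,1)` and
`c_r > 0`,
`‖φ(m+1) − φ*‖² − ‖φ m − φ*‖² ≤ −σ_φ·‖φ m − φ*‖² + c_r·‖r m‖²` for all `m`.
The metric projection `Π_Φ` onto the nonempty closed convex set `Φ` is
characterized by the hypothesis `hproj`. -/
theorem rapid_projected_gain_descent
    {H : Type*} [NormedAddCommGroup H] [InnerProductSpace ℝ H] [CompleteSpace H]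
    (Φ : Set H) (hne : Φ.Nonempty) (hclosed : IsClosed Φ) (hconv : Convex ℝ Φ)
    (proj : H → H)
    (hproj : ∀ x, proj x ∈ Φ ∧ ∀ y ∈ Φ, ‖x - proj x‖ ≤ ‖x - y‖)
    (φ : ℕ → H) (φstar : H) (hφstar : φstar ∈ Φ) (hφ0 : φ 0 ∈ Φ)
    (g r : ℕ → H) (α : ℕ → ℝ) (μ L αlo αhi : ℝ)
    (hμ : 0 < μ) (hL : 0 < L)
    (hαlo : 0 < αlo) (hαle : αlo ≤ αhi) (hαhi : αhi < 2 * μ / L ^ 2)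
    (hα : ∀ m, αlo ≤ α m ∧ α m ≤ αhi)
    (hupd : ∀ m, φ (m + 1) = proj (φ m - α m • (g m + r m)))
    (hmono : ∀ m, μ * ‖φ m - φstar‖ ^ 2 ≤ @inner ℝ H _ (g m) (φ m - φstar))
    (hgrow : ∀ m, ‖g m‖ ≤ L * ‖φ m - φstar‖) :
    ∃ σφ ∈ Set.Ioo (0 : ℝ) 1, ∃ cr > (0 : ℝ), ∀ m,
      ‖φ (m + 1) - φstar‖ ^ 2 - ‖φ m - φstar‖ ^ 2
        ≤ -σφ * ‖φ m - φstar‖ ^ 2 + cr * ‖r m‖ ^ 2 := by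
  -- projection contraction (squared)
  have hcontr : ∀ x : H, ‖proj x - φstar‖ ^ 2 ≤ ‖x - φstar‖ ^ 2 := by
    intro x
    obtain ⟨hmem, hmin⟩ := hproj x
    haveI : Nonempty ↑Φ := ⟨⟨proj x, hmem⟩⟩
    have hinf : ‖x - proj x‖ = ⨅ w : Φ, ‖x - w‖ := by
      apply le_antisymm
      · exact le_ciInf fun w => hmin w w.2
      · have hbdd : BddBelow (Set.range fun w : Φ => ‖x - (w : H)‖) :=
          ⟨0, by rintro b ⟨w, rfl⟩; exact norm_nonneg _⟩
        exact ciInf_le hbdd ⟨proj x, hmem⟩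
    have hvar : @inner ℝ H _ (x - proj x) (φstar - proj x) ≤ 0 :=
      ((norm_eq_iInf_iff_real_inner_le_zero hconv hmem).mp hinf) φstar hφstar
    have hexp := norm_add_sq_real (x - proj x) (proj x - φstar)
    rw [sub_add_sub_cancel] at hexp
    have hflip : @inner ℝ H _ (x - proj x) (proj x - φstar)
        = - @inner ℝ H _ (x - proj x) (φstar - proj x) := by
      rw [← inner_neg_right]; congr 1; abel
    nlinarith [sq_nonneg ‖x - proj x‖]
  have hαhi0 : 0 < αhi := lt_of_lt_of_le hαlo hαle
  set δ : ℝ := 2 * μ - αhi * L ^ 2 with hδdef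
  have hδ : 0 < δ := by
    have : αhi * L ^ 2 < 2 * μ := by
      rw [← lt_div_iff₀ (by positivity : (0:ℝ) < L ^ 2)] ; exact hαhi
    linarith
  set ε : ℝ := δ / (2 * αhi * L ^ 2) with hεdef
  set εinv : ℝ := (2 * αhi * L ^ 2) / δ with hεinvdef
  have hε : 0 < ε := by positivity
  have hεinv : 0 < εinv := by positivity
  have hεε : ε * εinv = 1 := by
    rw [hεdef, hεinvdef]; field_simp
  have hεL : ε * (αhi * L ^ 2) = δ / 2 := by
    rw [hεdef]; field_simp
  refine ⟨min (αlo * δ / 4) (1/2), ⟨lt_min (by positivity) (by norm_num),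
    lt_of_le_of_lt (min_le_right _ _) (by norm_num)⟩,
    αhi * (4 / δ) + αhi ^ 2 * (1 + εinv), by positivity, ?_⟩
  intro m
  obtain ⟨ha1, ha2⟩ := hα m
  have ha0 : 0 < α m := lt_of_lt_of_le hαlo ha1
  set a := α m
  set e := φ m - φstar with hedef
  set nr := ‖r m‖ with hnrdef
  set nE := ‖e‖ with hnEdef
  set ng := ‖g m‖ with hngdef
  have hnr0 : 0 ≤ nr := norm_nonneg _
  have hnE0 : 0 ≤ nE := norm_nonneg _
  have hng0 : 0 ≤ ng := norm_nonneg _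
  -- step 1: contraction
  have h1 : ‖φ (m + 1) - φstar‖ ^ 2 ≤ ‖e - a • (g m + r m)‖ ^ 2 := by
    rw [hupd m]
    have := hcontr (φ m - a • (g m + r m))
    rwa [sub_right_comm] at this
  -- step 2: expansion
  have h2 : ‖e - a • (g m + r m)‖ ^ 2
      = nE ^ 2 - 2 * (a * (@inner ℝ H _ (g m) e + @inner ℝ H _ (r m) e))
        + a ^ 2 * ‖g m + r m‖ ^ 2 := by
    rw [norm_sub_sq_real, real_inner_smul_right, norm_smul, real_inner_comm,
      inner_add_left]
    simp [mul_pow, sq_abs]; rfl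
  -- scalar bounds
  have hm := hmono m
  have hgr := hgrow m
  have hir : -(nr * nE) ≤ @inner ℝ H _ (r m) e := by
    have := abs_real_inner_le_norm (r m) e
    have := neg_abs_le (@inner ℝ H _ (r m) e)
    linarith
  have hna : ‖g m + r m‖ ≤ ng + nr := norm_add_le _ _
  have hna2 : ‖g m + r m‖ ^ 2 ≤ (ng + nr) ^ 2 :=
    pow_le_pow_left₀ (norm_nonneg _) hna 2
  -- Young inequalities
  have young1 : 2 * ng * nr ≤ ε * ng ^ 2 + εinv * nr ^ 2 := by
    rw [← mul_le_mul_iff_right₀ hε]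
    have h : ε * (ε * ng ^ 2 + εinv * nr ^ 2)
        = ε ^ 2 * ng ^ 2 + (ε * εinv) * nr ^ 2 := by ring
    rw [h, hεε, one_mul]
    nlinarith [sq_nonneg (ε * ng - nr)]
  have young2 : 2 * nr * nE ≤ δ / 4 * nE ^ 2 + 4 / δ * nr ^ 2 := by
    rw [← mul_le_mul_iff_right₀ hδ]
    have h : δ * (δ / 4 * nE ^ 2 + 4 / δ * nr ^ 2)
        = δ ^ 2 / 4 * nE ^ 2 + (δ * (4 / δ)) * nr ^ 2 := by ring
    have hδ4 : δ * (4 / δ) = 4 := by field_simp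
    rw [h, hδ4]
    nlinarith [sq_nonneg (δ / 2 * nE - 2 * nr), hnr0, hnE0, hδ]
  -- combine quadratic term
  have hq : a ^ 2 * ‖g m + r m‖ ^ 2
      ≤ a * (2 * μ - δ / 2) * nE ^ 2 + αhi ^ 2 * (1 + εinv) * nr ^ 2 := by
    have hb : (ng + nr) ^ 2 ≤ (1 + ε) * ng ^ 2 + (1 + εinv) * nr ^ 2 := by
      nlinarith
    have hc : ‖g m + r m‖ ^ 2 ≤ (1 + ε) * ng ^ 2 + (1 + εinv) * nr ^ 2 :=
      le_trans hna2 hb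
    have hng2 : ng ^ 2 ≤ L ^ 2 * nE ^ 2 := by nlinarith
    have hd : ‖g m + r m‖ ^ 2 ≤ (1 + ε) * (L ^ 2 * nE ^ 2) + (1 + εinv) * nr ^ 2 := by
      nlinarith [mul_le_mul_of_nonneg_left hng2 (le_of_lt (by positivity : (0:ℝ) < 1 + ε))]
    have he : a ^ 2 * ‖g m + r m‖ ^ 2
        ≤ a ^ 2 * ((1 + ε) * (L ^ 2 * nE ^ 2)) + a ^ 2 * ((1 + εinv) * nr ^ 2) := by
      nlinarith [mul_le_mul_of_nonneg_left hd (sq_nonneg a)]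
    have hf : a ^ 2 * ((1 + ε) * (L ^ 2 * nE ^ 2)) ≤ a * (2 * μ - δ / 2) * nE ^ 2 := by
      have haa : a * ((1 + ε) * L ^ 2) ≤ αhi * ((1 + ε) * L ^ 2) :=
        mul_le_mul_of_nonneg_right ha2 (by positivity)
      have hco : αhi * ((1 + ε) * L ^ 2) = 2 * μ - δ / 2 := by
        have : αhi * ((1 + ε) * L ^ 2) = αhi * L ^ 2 + ε * (αhi * L ^ 2) := by ring
        rw [this, hεL]; rw [hδdef]; ring
      calc a ^ 2 * ((1 + ε) * (L ^ 2 * nE ^ 2))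
          = (a * ((1 + ε) * L ^ 2)) * (a * nE ^ 2) := by ring
        _ ≤ (αhi * ((1 + ε) * L ^ 2)) * (a * nE ^ 2) := by
            apply mul_le_mul_of_nonneg_right haa (by positivity)
        _ = a * (2 * μ - δ / 2) * nE ^ 2 := by rw [hco]; ring
    have hg2 : a ^ 2 * ((1 + εinv) * nr ^ 2) ≤ αhi ^ 2 * (1 + εinv) * nr ^ 2 := by
      have ha2' : a ^ 2 ≤ αhi ^ 2 := by
        have := pow_le_pow_left₀ ha0.le ha2 2
        linarith
      have := mul_le_mul_of_nonneg_right ha2'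
        (by positivity : (0:ℝ) ≤ (1 + εinv) * nr ^ 2)
      linarith
    linarith
  -- combine linear term
  have hl : -(2 * (a * (@inner ℝ H _ (g m) e + @inner ℝ H _ (r m) e)))
      ≤ -(2 * a * μ) * nE ^ 2 + a * (δ / 4 * nE ^ 2 + 4 / δ * nr ^ 2) := by
    have h1' : a * (μ * nE ^ 2) ≤ a * @inner ℝ H _ (g m) e :=
      mul_le_mul_of_nonneg_left hm ha0.le
    have h2' : a * (-(nr * nE)) ≤ a * @inner ℝ H _ (r m) e :=
      mul_le_mul_of_nonneg_left hir ha0.le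
    have h3' : a * (2 * nr * nE) ≤ a * (δ / 4 * nE ^ 2 + 4 / δ * nr ^ 2) :=
      mul_le_mul_of_nonneg_left young2 ha0.le
    linarith
  -- final assembly
  have hσ : min (αlo * δ / 4) (1/2) ≤ αlo * δ / 4 := min_le_left _ _
  have hcoef : -(a * (δ / 4)) * nE ^ 2 ≤ -min (αlo * δ / 4) (1/2) * nE ^ 2 := by
    have h' : min (αlo * δ / 4) (1/2) ≤ a * (δ / 4) := by
      have : αlo * (δ / 4) ≤ a * (δ / 4) :=
        mul_le_mul_of_nonneg_right ha1 (by positivity)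
      have := min_le_left (αlo * δ / 4) (1/2 : ℝ)
      linarith
    have := mul_le_mul_of_nonneg_right h' (sq_nonneg nE)
    linarith
  have hcr : a * (4 / δ) * nr ^ 2 ≤ αhi * (4 / δ) * nr ^ 2 := by
    have h' : a * (4 / δ) ≤ αhi * (4 / δ) :=
      mul_le_mul_of_nonneg_right ha2 (by positivity)
    have := mul_le_mul_of_nonneg_right h' (sq_nonneg nr)
    linarith
  calc ‖φ (m + 1) - φstar‖ ^ 2 - ‖φ m - φstar‖ ^ 2
      ≤ ‖e - a • (g m + r m)‖ ^ 2 - nE ^ 2 := by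
        simp only [← hedef, ← hnEdef]; linarith
    _ = -(2 * (a * (@inner ℝ H _ (g m) e + @inner ℝ H _ (r m) e)))
        + a ^ 2 * ‖g m + r m‖ ^ 2 := by rw [h2]; ring
    _ ≤ -min (αlo * δ / 4) (1/2) * nE ^ 2
        + (αhi * (4 / δ) + αhi ^ 2 * (1 + εinv)) * nr ^ 2 := by
        linarith
    _ = -min (αlo * δ / 4) (1/2) * ‖φ m - φstar‖ ^ 2
        + (αhi * (4 / δ) + αhi ^ 2 * (1 + εinv)) * ‖r m‖ ^ 2 := by rw [hnEdef, hedef, hnrdef]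
end

section
/- (Theorem 2, main ISS estimate for RAPID.) Under the stated assumptions, there exist constants C1, C2 > 0 and ρ ∈ (0,1) such that for every m ≥ 1: √(‖χ m‖² + ‖φ m − φ*‖²) ≤ C1·ρ^m·√(‖χ 0‖² + ‖φ 0 − φ*‖²) + C2·sup_{0 ≤ j ≤ m−1} ‖w j‖; in particular, the sampled RAPID closed loop is locally input-to-state stable with respect to the disturbance sequence w. -/
open scoped RealInnerProductSpace

private lemma rapid_young {s : ℝ} (hs : 0 < s) (x y : ℝ) :
    2 * (x * y) ≤ s * x ^ 2 + y ^ 2 / s := by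
  have h : (s * x ^ 2 + y ^ 2 / s) - 2 * (x * y) = (s * x - y) ^ 2 / s := by
    field_simp; ring
  nlinarith [div_nonneg (sq_nonneg (s * x - y)) hs.le]

private lemma rapid_young' {s si : ℝ} (hs : 0 < s) (hsi : s * si = 1) (x y : ℝ) :
    2 * (x * y) ≤ s * x ^ 2 + si * y ^ 2 := by
  have hs0 : s ≠ 0 := hs.ne'
  have hsi' : si = 1 / s := by
    field_simp
    linarith [hsi]
  rw [hsi', div_mul_eq_mul_div, one_mul]
  exact rapid_young hs x y

private lemma rapid_sqrt_add_le {a b : ℝ} (ha : 0 ≤ a) (hb : 0 ≤ b) :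
    Real.sqrt (a + b) ≤ Real.sqrt a + Real.sqrt b := by
  have h : a + b ≤ (Real.sqrt a + Real.sqrt b) ^ 2 := by
    nlinarith [Real.sq_sqrt ha, Real.sq_sqrt hb, Real.sqrt_nonneg a, Real.sqrt_nonneg b]
  calc Real.sqrt (a + b) ≤ Real.sqrt ((Real.sqrt a + Real.sqrt b) ^ 2) := Real.sqrt_le_sqrt h
    _ = Real.sqrt a + Real.sqrt b := Real.sqrt_sq (by positivity)

private lemma rapid_sqrt_pow {x : ℝ} (hx : 0 ≤ x) (n : ℕ) :
    Real.sqrt (x ^ n) = (Real.sqrt x) ^ n := by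
  rw [← Real.sqrt_sq (pow_nonneg (Real.sqrt_nonneg x) n), ← pow_mul, mul_comm n 2, pow_mul,
    Real.sq_sqrt hx]

private lemma rapid_proj_contract {H : Type*} [NormedAddCommGroup H] [InnerProductSpace ℝ H]
    (Φ : Set H) (hconv : Convex ℝ Φ) (φstar : H) (hφstar : φstar ∈ Φ)
    (x p : H) (hmem : p ∈ Φ) (hmin : ∀ y ∈ Φ, ‖x - p‖ ≤ ‖x - y‖) :
    ‖p - φstar‖ ≤ ‖x - φstar‖ := by
  haveI : Nonempty Φ := ⟨⟨p, hmem⟩⟩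
  have hinf : ‖x - p‖ = ⨅ w : Φ, ‖x - w‖ := by
    apply le_antisymm
    · exact le_ciInf fun y => hmin y y.2
    · have hbdd : BddBelow (Set.range fun w : Φ => ‖x - (w:H)‖) := by
        refine ⟨0, ?_⟩
        rintro _ ⟨z, rfl⟩
        exact norm_nonneg _
      exact ciInf_le hbdd ⟨p, hmem⟩
  have hip := (norm_eq_iInf_iff_real_inner_le_zero hconv hmem).mp hinf φstar hφstar
  have hipflip : (inner ℝ (x - p) (φstar - p) : ℝ) = -(inner ℝ (x - p) (p - φstar) : ℝ) := by
    rw [← inner_neg_right]; congr 1; abel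
  have hipnn : (0:ℝ) ≤ (inner ℝ (x - p) (p - φstar) : ℝ) := by rw [hipflip] at hip; linarith
  have expand : ‖x - φstar‖ ^ 2
      = ‖x - p‖ ^ 2 + 2 * (inner ℝ (x - p) (p - φstar) : ℝ) + ‖p - φstar‖ ^ 2 := by
    have h : x - φstar = (x - p) + (p - φstar) := by abel
    rw [h, norm_add_sq_real]
  have hge : ‖p - φstar‖ ^ 2 ≤ ‖x - φstar‖ ^ 2 := by nlinarith [sq_nonneg ‖x - p‖]
  exact (pow_le_pow_iff_left₀ (norm_nonneg _) (norm_nonneg _) two_ne_zero).mp hge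



set_option maxHeartbeats 1000000 in
/-- Theorem 2 (main sampled-data ISS estimate for RAPID): under the
plant-regulation Lyapunov assumption and the projected risk-aware gain-update
assumption, there exist `C1, C2 > 0` and `ρ ∈ (0,1)` such that for all `m ≥ 1`,
`√(‖χ m‖² + ‖φ m − φ*‖²) ≤ C1·ρ^m·√(‖χ 0‖² + ‖φ 0 − φ*‖²)
  + C2·sup_{0 ≤ j ≤ m−1} ‖w j‖`;
in particular, the sampled RAPID closed loop is locally input-to-state stable
with respect to the disturbance sequence `w`. -/
theorem rapid_iss_estimate
    {E1 F H : Type*} [NormedAddCommGroup E1] [NormedSpace ℝ E1]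
    [NormedAddCommGroup F] [NormedSpace ℝ F]
    [NormedAddCommGroup H] [InnerProductSpace ℝ H] [CompleteSpace H]
    (χ : ℕ → E1) (w : ℕ → F) (φ : ℕ → H)
    (Vy : E1 → ℝ) (b1 b2 b3 b4 b5 : ℝ)
    (hb1 : 0 < b1) (hb2 : 0 < b2) (hb3 : 0 < b3) (hb4 : 0 < b4) (hb5 : 0 < b5)
    (φstar : H)
    (hVlow : ∀ m, b1 * ‖χ m‖ ^ 2 ≤ Vy (χ m))
    (hVup : ∀ m, Vy (χ m) ≤ b2 * ‖χ m‖ ^ 2)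
    (hVdec : ∀ m, Vy (χ (m + 1)) - Vy (χ m)
      ≤ -b3 * ‖χ m‖ ^ 2 + b4 * ‖φ m - φstar‖ ^ 2 + b5 * ‖w m‖ ^ 2)
    (Φ : Set H) (hne : Φ.Nonempty) (hclosed : IsClosed Φ) (hconv : Convex ℝ Φ)
    (hφstar : φstar ∈ Φ) (hφ0 : φ 0 ∈ Φ)
    (proj : H → H)
    (hproj : ∀ x, proj x ∈ Φ ∧ ∀ y ∈ Φ, ‖x - proj x‖ ≤ ‖x - y‖)
    (g r : ℕ → H) (hr : ∀ m, ‖r m‖ ≤ ‖w m‖)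
    (α : ℕ → ℝ) (μ L αlo αhi : ℝ)
    (hμ : 0 < μ) (hL : 0 < L)
    (hαlo : 0 < αlo) (hαle : αlo ≤ αhi) (hαhi : αhi < 2 * μ / L ^ 2)
    (hα : ∀ m, αlo ≤ α m ∧ α m ≤ αhi)
    (hupd : ∀ m, φ (m + 1) = proj (φ m - α m • (g m + r m)))
    (hmono : ∀ m, μ * ‖φ m - φstar‖ ^ 2 ≤ @inner ℝ H _ (g m) (φ m - φstar))
    (hgrow : ∀ m, ‖g m‖ ≤ L * ‖φ m - φstar‖) :
    ∃ C1 > (0 : ℝ), ∃ C2 > (0 : ℝ), ∃ ρ ∈ Set.Ioo (0 : ℝ) 1,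
      ∀ m, (hm : 1 ≤ m) →
        Real.sqrt (‖χ m‖ ^ 2 + ‖φ m - φstar‖ ^ 2)
          ≤ C1 * ρ ^ m * Real.sqrt (‖χ 0‖ ^ 2 + ‖φ 0 - φstar‖ ^ 2)
            + C2 * (Finset.range m).sup'
                (Finset.nonempty_range_iff.mpr (Nat.one_le_iff_ne_zero.mp hm))
                (fun j => ‖w j‖) := by
  have hL2 : (0:ℝ) < L ^ 2 := by positivity
  have hαhi0 : 0 < αhi := lt_of_lt_of_le hαlo hαle
  set δ : ℝ := 2 * μ - αhi * L ^ 2 with hδdef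
  have hδ : 0 < δ := by
    have := (lt_div_iff₀ hL2).mp hαhi
    simp only [hδdef]; linarith
  have hden : (0:ℝ) < 1 + αhi * L ^ 2 := by positivity
  set ε : ℝ := δ / (2 * (1 + αhi * L ^ 2)) with hεdef
  have hε : 0 < ε := by positivity
  have hεid : ε * (1 + αhi * L ^ 2) = δ / 2 := by
    rw [hεdef]; field_simp
  obtain ⟨εi, hεi0, hεεi⟩ : ∃ t : ℝ, 0 < t ∧ ε * t = 1 :=
    ⟨1 / ε, by positivity, by field_simp⟩
  set θ : ℝ := max (1 - αlo * (δ / 2)) (1 / 2) with hθdef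
  have hθhalf : (1/2 : ℝ) ≤ θ := le_max_right _ _
  have hθ0 : (0:ℝ) < θ := lt_of_lt_of_le one_half_pos hθhalf
  have hθ1 : θ < 1 := by
    apply max_lt _ (by norm_num)
    nlinarith [mul_pos hαlo (half_pos hδ)]
  set cw : ℝ := αhi * εi + αhi ^ 2 * (1 + εi) with hcwdef
  have hcw : 0 < cw := by
    rw [hcwdef]
    have := mul_pos hαhi0 hεi0
    nlinarith [sq_nonneg αhi, mul_pos (mul_pos hαhi0 hαhi0) hεi0]
  -- gain recursion
  have hgain : ∀ m, ‖φ (m+1) - φstar‖ ^ 2 ≤ θ * ‖φ m - φstar‖ ^ 2 + cw * ‖w m‖ ^ 2 := by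
    intro m
    obtain ⟨halo, hahi⟩ := hα m
    have ha0 : 0 < α m := lt_of_lt_of_le hαlo halo
    set a := α m with hadef
    set v := g m + r m with hvdef
    have h1 : ‖φ (m+1) - φstar‖ ≤ ‖(φ m - a • v) - φstar‖ := by
      rw [hupd m]
      exact rapid_proj_contract Φ hconv φstar hφstar _ _ (hproj _).1 (hproj _).2
    have h1' : ‖φ (m+1) - φstar‖ ^ 2 ≤ ‖(φ m - a • v) - φstar‖ ^ 2 :=
      pow_le_pow_left₀ (norm_nonneg _) h1 2
    have h2 : ‖(φ m - a • v) - φstar‖ ^ 2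
        = ‖φ m - φstar‖ ^ 2 - 2 * (a * (inner ℝ (φ m - φstar) v : ℝ)) + a ^ 2 * ‖v‖ ^ 2 := by
      have hrw : (φ m - a • v) - φstar = (φ m - φstar) - a • v := by abel
      rw [hrw, norm_sub_sq_real, real_inner_smul_right, norm_smul, Real.norm_eq_abs,
        mul_pow, sq_abs]
    have hip : μ * ‖φ m - φstar‖ ^ 2 - ‖r m‖ * ‖φ m - φstar‖
        ≤ (inner ℝ (φ m - φstar) v : ℝ) := by
      have e1 : (inner ℝ (φ m - φstar) v : ℝ)
          = (inner ℝ (g m) (φ m - φstar) : ℝ) + (inner ℝ (φ m - φstar) (r m) : ℝ) := by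
        rw [hvdef, inner_add_right, real_inner_comm]
      have e2 : |(inner ℝ (φ m - φstar) (r m) : ℝ)| ≤ ‖φ m - φstar‖ * ‖r m‖ :=
        abs_real_inner_le_norm _ _
      have e3 := neg_abs_le ((inner ℝ (φ m - φstar) (r m) : ℝ))
      have e4 := hmono m
      rw [e1]
      linarith
    have hgnorm : ‖v‖ ≤ L * ‖φ m - φstar‖ + ‖r m‖ := by
      calc ‖v‖ ≤ ‖g m‖ + ‖r m‖ := norm_add_le _ _
        _ ≤ L * ‖φ m - φstar‖ + ‖r m‖ := by have := hgrow m; linarith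
    have hv2 : ‖v‖ ^ 2 ≤ (L * ‖φ m - φstar‖ + ‖r m‖) ^ 2 :=
      pow_le_pow_left₀ (norm_nonneg _) hgnorm 2
    have hy1 : 2 * (‖φ m - φstar‖ * ‖r m‖)
        ≤ ε * ‖φ m - φstar‖ ^ 2 + εi * ‖r m‖ ^ 2 := rapid_young' hε hεεi _ _
    have hy2 : 2 * ((L * ‖φ m - φstar‖) * ‖r m‖)
        ≤ ε * (L * ‖φ m - φstar‖) ^ 2 + εi * ‖r m‖ ^ 2 := rapid_young' hε hεεi _ _
    rw [h2] at h1'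
    have hmain : ‖φ (m+1) - φstar‖ ^ 2
        ≤ (1 - a * (2 * μ - ε - a * (1 + ε) * L ^ 2)) * ‖φ m - φstar‖ ^ 2
          + (a * εi + a ^ 2 * (1 + εi)) * ‖r m‖ ^ 2 := by
      linarith [h1',
        mul_le_mul_of_nonneg_left hip (by positivity : (0:ℝ) ≤ 2 * a),
        mul_le_mul_of_nonneg_left hv2 (sq_nonneg a),
        mul_le_mul_of_nonneg_left hy1 ha0.le,
        mul_le_mul_of_nonneg_left hy2 (sq_nonneg a)]
    have hfac : δ / 2 ≤ 2 * μ - ε - a * (1 + ε) * L ^ 2 := by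
      have h5 : a * ((1 + ε) * L ^ 2) ≤ αhi * ((1 + ε) * L ^ 2) :=
        mul_le_mul_of_nonneg_right hahi (by positivity)
      simp only [hδdef] at hεid ⊢
      linarith [hεid, h5]
    have hcoef : 1 - a * (2 * μ - ε - a * (1 + ε) * L ^ 2) ≤ θ := by
      have h6 : αlo * (δ / 2) ≤ a * (2 * μ - ε - a * (1 + ε) * L ^ 2) :=
        mul_le_mul halo hfac (by positivity) ha0.le
      calc 1 - a * (2 * μ - ε - a * (1 + ε) * L ^ 2) ≤ 1 - αlo * (δ / 2) := by linarith
        _ ≤ θ := le_max_left _ _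
    have hconst : a * εi + a ^ 2 * (1 + εi) ≤ cw := by
      rw [hcwdef]
      have hq1 : a * εi ≤ αhi * εi := mul_le_mul_of_nonneg_right hahi hεi0.le
      have hq2 : a ^ 2 * (1 + εi) ≤ αhi ^ 2 * (1 + εi) :=
        mul_le_mul_of_nonneg_right (pow_le_pow_left₀ ha0.le hahi 2) (by positivity)
      linarith
    have hrr : ‖r m‖ ^ 2 ≤ ‖w m‖ ^ 2 := pow_le_pow_left₀ (norm_nonneg _) (hr m) 2
    have hfin1 : (1 - a * (2 * μ - ε - a * (1 + ε) * L ^ 2)) * ‖φ m - φstar‖ ^ 2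
        ≤ θ * ‖φ m - φstar‖ ^ 2 := mul_le_mul_of_nonneg_right hcoef (sq_nonneg _)
    have hfin2 : (a * εi + a ^ 2 * (1 + εi)) * ‖r m‖ ^ 2 ≤ cw * ‖w m‖ ^ 2 :=
      mul_le_mul hconst hrr (sq_nonneg _) hcw.le
    linarith
  -- composite Lyapunov function
  set lam : ℝ := min (b3 / b2) (1 / 2) with hlamdef
  have hlam0 : 0 < lam := lt_min (div_pos hb3 hb2) one_half_pos
  have hlamhalf : lam ≤ 1 / 2 := min_le_right _ _
  have hlamb : lam * b2 ≤ b3 := by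
    have h7 : lam ≤ b3 / b2 := min_le_left _ _
    exact (le_div_iff₀ hb2).mp h7
  set ρ2 : ℝ := max (1 - lam) ((1 + θ) / 2) with hρ2def
  have hρ2pos : 0 < ρ2 := lt_of_lt_of_le (by linarith : (0:ℝ) < (1 + θ) / 2) (le_max_right _ _)
  have hρ2lt : ρ2 < 1 := max_lt (by linarith) (by linarith)
  have h1θ : (0:ℝ) < 1 - θ := by linarith
  set c : ℝ := 2 * b4 / (1 - θ) with hcdef
  have hc0 : 0 < c := div_pos (by linarith) h1θ
  have hcid : c * (1 - θ) = 2 * b4 := by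
    rw [hcdef]; field_simp
  set C0 : ℝ := b5 + c * cw with hC0def
  have hC0 : 0 < C0 := by positivity
  set Wl : ℕ → ℝ := fun m => Vy (χ m) + c * ‖φ m - φstar‖ ^ 2 with hWdef
  have hWrec : ∀ m, Wl (m+1) ≤ ρ2 * Wl m + C0 * ‖w m‖ ^ 2 := by
    intro m
    have hdec := hVdec m
    have hg := hgain m
    have hVu := hVup m
    have hV0 : 0 ≤ Vy (χ m) := le_trans (by positivity) (hVlow m)
    have p1 : lam * Vy (χ m) ≤ b3 * ‖χ m‖ ^ 2 := by
      calc lam * Vy (χ m) ≤ lam * (b2 * ‖χ m‖ ^ 2) := mul_le_mul_of_nonneg_left hVu hlam0.le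
        _ ≤ b3 * ‖χ m‖ ^ 2 := by
            linarith [mul_le_mul_of_nonneg_right hlamb (sq_nonneg ‖χ m‖)]
    have p2 : (1 - lam) * Vy (χ m) ≤ ρ2 * Vy (χ m) :=
      mul_le_mul_of_nonneg_right (le_max_left _ _) hV0
    have p3 : ((1 + θ) / 2) * (c * ‖φ m - φstar‖ ^ 2) ≤ ρ2 * (c * ‖φ m - φstar‖ ^ 2) :=
      mul_le_mul_of_nonneg_right (le_max_right _ _) (by positivity)
    have p4 : c * ‖φ (m+1) - φstar‖ ^ 2 ≤ c * (θ * ‖φ m - φstar‖ ^ 2 + cw * ‖w m‖ ^ 2) :=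
      mul_le_mul_of_nonneg_left hg hc0.le
    have hcide : (c * (1 - θ)) * ‖φ m - φstar‖ ^ 2 = (2 * b4) * ‖φ m - φstar‖ ^ 2 := by
      rw [hcid]
    simp only [hWdef, hC0def]
    linarith [hdec, p1, p2, p3, p4, hcide]
  set K : ℝ := C0 / (1 - ρ2) with hKdef
  have hKpos : 0 < K := div_pos hC0 (by linarith)
  have h1ρ2 : (0:ℝ) < 1 - ρ2 := by linarith
  have hKid : ρ2 * K + C0 = K := by
    have hKe : K * (1 - ρ2) = C0 := by
      rw [hKdef]
      field_simp
    linarith [hKe]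
  have hC0K : C0 ≤ K := by linarith [hKid, mul_nonneg hρ2pos.le hKpos.le]
  -- induction
  have key : ∀ m (hm1 : 1 ≤ m), Wl m ≤ ρ2 ^ m * Wl 0
      + K * ((Finset.range m).sup'
          (Finset.nonempty_range_iff.mpr (Nat.one_le_iff_ne_zero.mp hm1))
          (fun j => ‖w j‖)) ^ 2 := by
    intro m
    induction m with
    | zero => intro h; exact absurd h (by norm_num)
    | succ n ih =>
      intro h1n
      rcases Nat.eq_zero_or_pos n with hn | hn
      · subst hn
        simp only [zero_add, Finset.range_one, Finset.sup'_singleton]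
        have hq := mul_le_mul_of_nonneg_right hC0K (sq_nonneg ‖w 0‖)
        calc Wl 1 ≤ ρ2 * Wl 0 + C0 * ‖w 0‖ ^ 2 := hWrec 0
          _ ≤ ρ2 ^ 1 * Wl 0 + K * ‖w 0‖ ^ 2 := by rw [pow_one]; linarith
      · have ihn := ih hn
        set Mn : ℝ := (Finset.range n).sup'
            (Finset.nonempty_range_iff.mpr (Nat.one_le_iff_ne_zero.mp hn))
            (fun j => ‖w j‖) with hMndef
        set Mn1 : ℝ := (Finset.range (n+1)).sup'
            (Finset.nonempty_range_iff.mpr (Nat.one_le_iff_ne_zero.mp h1n))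
            (fun j => ‖w j‖) with hMn1def
        have hM0 : 0 ≤ Mn := by
          rw [hMndef]
          exact le_trans (norm_nonneg (w 0))
            (Finset.le_sup' (fun j => ‖w j‖) (Finset.mem_range.mpr hn))
        have hMle : Mn ≤ Mn1 := by
          rw [hMndef, hMn1def]
          exact Finset.sup'_le _ _ fun j hj =>
            Finset.le_sup' (fun j => ‖w j‖) (Finset.mem_range.mpr
              (lt_trans (Finset.mem_range.mp hj) (Nat.lt_succ_self n)))
        have hwm : ‖w n‖ ≤ Mn1 := by
          rw [hMn1def]
          exact Finset.le_sup' (fun j => ‖w j‖) (Finset.mem_range.mpr (Nat.lt_succ_self n))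
        have hM2 := pow_le_pow_left₀ hM0 hMle 2
        have hw2 := pow_le_pow_left₀ (norm_nonneg (w n)) hwm 2
        have hstep := hWrec n
        have hmul1 := mul_le_mul_of_nonneg_left ihn hρ2pos.le
        have hmul2 := mul_le_mul_of_nonneg_left hw2 hC0.le
        have hmul3 := mul_le_mul_of_nonneg_left hM2 (mul_nonneg hρ2pos.le hKpos.le)
        have hpow : ρ2 * ρ2 ^ n * Wl 0 = ρ2 ^ (n+1) * Wl 0 := by rw [pow_succ]; ring
        have hKide : ρ2 * K * Mn1 ^ 2 + C0 * Mn1 ^ 2 = K * Mn1 ^ 2 := by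
          have h := congrArg (fun t => t * Mn1 ^ 2) hKid
          simpa [add_mul] using h
        linarith [hstep, hmul1, hmul2, hmul3, hpow, hKide]
  -- final assembly
  set cmin : ℝ := min b1 c with hcmindef
  set cmax : ℝ := max b2 c with hcmaxdef
  have hcmin : 0 < cmin := lt_min hb1 hc0
  have hcmax : 0 < cmax := lt_of_lt_of_le hb2 (le_max_left _ _)
  refine ⟨Real.sqrt (cmax / cmin), Real.sqrt_pos.mpr (div_pos hcmax hcmin),
    Real.sqrt (K / cmin), Real.sqrt_pos.mpr (div_pos hKpos hcmin),
    Real.sqrt ρ2, ⟨Real.sqrt_pos.mpr hρ2pos, by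
      rw [← Real.sqrt_one]; exact Real.sqrt_lt_sqrt hρ2pos.le hρ2lt⟩, ?_⟩
  intro m hm
  set M : ℝ := (Finset.range m).sup'
      (Finset.nonempty_range_iff.mpr (Nat.one_le_iff_ne_zero.mp hm)) (fun j => ‖w j‖) with hMdef
  have hkey := key m hm
  have hM0 : 0 ≤ M := by
    rw [hMdef]
    exact le_trans (norm_nonneg (w 0))
      (Finset.le_sup' (fun j => ‖w j‖) (Finset.mem_range.mpr hm))
  have hlow : cmin * (‖χ m‖ ^ 2 + ‖φ m - φstar‖ ^ 2) ≤ Wl m := by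
    have h8 := hVlow m
    have h9 : cmin ≤ b1 := min_le_left _ _
    have h10 : cmin ≤ c := min_le_right _ _
    simp only [hWdef]
    linarith [h8, mul_le_mul_of_nonneg_right h9 (sq_nonneg ‖χ m‖),
      mul_le_mul_of_nonneg_right h10 (sq_nonneg ‖φ m - φstar‖),
      mul_le_mul_of_nonneg_right (le_of_eq (rfl : b1 = b1)) (sq_nonneg ‖χ m‖)]
  have hup : Wl 0 ≤ cmax * (‖χ 0‖ ^ 2 + ‖φ 0 - φstar‖ ^ 2) := by
    have h11 := hVup 0
    have h12 : b2 ≤ cmax := le_max_left _ _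
    have h13 : c ≤ cmax := le_max_right _ _
    simp only [hWdef]
    linarith [h11, mul_le_mul_of_nonneg_right h12 (sq_nonneg ‖χ 0‖),
      mul_le_mul_of_nonneg_right h13 (sq_nonneg ‖φ 0 - φstar‖)]
  have hchain : cmin * (‖χ m‖ ^ 2 + ‖φ m - φstar‖ ^ 2)
      ≤ ρ2 ^ m * (cmax * (‖χ 0‖ ^ 2 + ‖φ 0 - φstar‖ ^ 2)) + K * M ^ 2 := by
    have h14 := mul_le_mul_of_nonneg_left hup (pow_nonneg hρ2pos.le m)
    linarith
  have hS : ‖χ m‖ ^ 2 + ‖φ m - φstar‖ ^ 2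
      ≤ ρ2 ^ m * (cmax / cmin) * (‖χ 0‖ ^ 2 + ‖φ 0 - φstar‖ ^ 2) + (K / cmin) * M ^ 2 := by
    rw [← mul_le_mul_iff_right₀ hcmin]
    have hfield : cmin * (ρ2 ^ m * (cmax / cmin) * (‖χ 0‖ ^ 2 + ‖φ 0 - φstar‖ ^ 2)
        + (K / cmin) * M ^ 2)
        = ρ2 ^ m * (cmax * (‖χ 0‖ ^ 2 + ‖φ 0 - φstar‖ ^ 2)) + K * M ^ 2 := by
      field_simp
    rw [hfield]
    exact hchain
  have hs1 := Real.sqrt_le_sqrt hS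
  have hs2 : Real.sqrt (ρ2 ^ m * (cmax / cmin) * (‖χ 0‖ ^ 2 + ‖φ 0 - φstar‖ ^ 2)
        + (K / cmin) * M ^ 2)
      ≤ Real.sqrt (ρ2 ^ m * (cmax / cmin) * (‖χ 0‖ ^ 2 + ‖φ 0 - φstar‖ ^ 2))
        + Real.sqrt ((K / cmin) * M ^ 2) :=
    rapid_sqrt_add_le (by positivity) (by positivity)
  have hs3 : Real.sqrt (ρ2 ^ m * (cmax / cmin) * (‖χ 0‖ ^ 2 + ‖φ 0 - φstar‖ ^ 2))
      = Real.sqrt ρ2 ^ m * Real.sqrt (cmax / cmin)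
        * Real.sqrt (‖χ 0‖ ^ 2 + ‖φ 0 - φstar‖ ^ 2) := by
    rw [Real.sqrt_mul (by positivity), Real.sqrt_mul (by positivity),
      rapid_sqrt_pow hρ2pos.le]
  have hs4 : Real.sqrt ((K / cmin) * M ^ 2) = Real.sqrt (K / cmin) * M := by
    rw [Real.sqrt_mul (by positivity), Real.sqrt_sq hM0]
  calc Real.sqrt (‖χ m‖ ^ 2 + ‖φ m - φstar‖ ^ 2)
      ≤ Real.sqrt (ρ2 ^ m * (cmax / cmin) * (‖χ 0‖ ^ 2 + ‖φ 0 - φstar‖ ^ 2))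
        + Real.sqrt ((K / cmin) * M ^ 2) := le_trans hs1 hs2
    _ = Real.sqrt (cmax / cmin) * Real.sqrt ρ2 ^ m
          * Real.sqrt (‖χ 0‖ ^ 2 + ‖φ 0 - φstar‖ ^ 2)
        + Real.sqrt (K / cmin) * M := by rw [hs3, hs4]; ring
end

section
/- (Theorem 2, ultimate boundedness.) Under the stated assumptions, if w̄ := sup_{j ∈ ℕ} ‖w j‖ is finite, then there exists a constant C2 > 0 (depending only on the constants in the assumptions) such that limsup_{m→∞} √(‖χ m‖² + ‖φ m − φ*‖²) ≤ C2·w̄. -/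
open Filter

private lemma rapid_proj_nonexp {H : Type*} [NormedAddCommGroup H] [InnerProductSpace ℝ H]
    (Φ : Set H) (hconv : Convex ℝ Φ) (p x z : H) (hp : p ∈ Φ) (hz : z ∈ Φ)
    (hmin : ∀ y ∈ Φ, ‖x - p‖ ≤ ‖x - y‖) : ‖p - z‖ ≤ ‖x - z‖ := by
  have hinf : ‖x - p‖ = ⨅ y : Φ, ‖x - y‖ := by
    apply le_antisymm
    · haveI : Nonempty Φ := ⟨⟨p, hp⟩⟩
      exact le_ciInf fun y => hmin y y.2
    · exact ciInf_le ⟨0, by rintro _ ⟨y, rfl⟩; positivity⟩ (⟨p, hp⟩ : Φ)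
  have hvar := (norm_eq_iInf_iff_real_inner_le_zero hconv hp).mp hinf z hz
  have hexp := norm_add_sq_real (x - p) (p - z)
  have h1 : (x - p) + (p - z) = x - z := by abel
  rw [h1] at hexp
  have h2 : @inner ℝ H _ (x - p) (p - z) = - @inner ℝ H _ (x - p) (z - p) := by
    rw [← inner_neg_right]; congr 1; abel
  have h3 : ‖p - z‖ ^ 2 ≤ ‖x - z‖ ^ 2 := by
    rw [hexp]; nlinarith [sq_nonneg ‖x - p‖]
  exact (pow_le_pow_iff_left₀ (norm_nonneg _) (norm_nonneg _) (by norm_num)).mp h3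

/-- Polynomial step estimate for the gain recursion. -/
private lemma rapid_poly (a αhi μ L κ A p wb : ℝ) (hp0 : 0 ≤ p) (hwb0 : 0 ≤ wb)
    (hκ : 0 < κ) (ha0 : 0 ≤ a) (ha2 : a ≤ αhi) (hL0 : 0 ≤ L)
    (hstep : κ ≤ a * (2 * μ - a * L ^ 2)) (hA : A = 2 * αhi + 2 * αhi ^ 2 * L) :
    p ^ 2 - 2 * (a * (μ * p ^ 2 - wb * p)) + (a * (L * p + wb)) ^ 2
      ≤ (1 - 3 * κ / 4) * p ^ 2 + (A ^ 2 / κ + αhi ^ 2) * wb ^ 2 := by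
  have hasq : a ^ 2 ≤ αhi ^ 2 := pow_le_pow_left₀ ha0 ha2 2
  have hcoef : 2 * a + 2 * a ^ 2 * L ≤ A := by
    have := mul_le_mul_of_nonneg_right hasq hL0
    rw [hA]; linarith
  have hpw : 0 ≤ p * wb := mul_nonneg hp0 hwb0
  have hc1 : (1 - a * (2 * μ - a * L ^ 2)) * p ^ 2 ≤ (1 - κ) * p ^ 2 :=
    mul_le_mul_of_nonneg_right (by linarith) (sq_nonneg p)
  have hc2 : (2 * a + 2 * a ^ 2 * L) * (p * wb) ≤ A * (p * wb) :=
    mul_le_mul_of_nonneg_right hcoef hpw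
  have hc3 : a ^ 2 * wb ^ 2 ≤ αhi ^ 2 * wb ^ 2 :=
    mul_le_mul_of_nonneg_right hasq (sq_nonneg wb)
  have hyoung : A * (p * wb) ≤ (κ / 4) * p ^ 2 + (A ^ 2 / κ) * wb ^ 2 := by
    have hsq := sq_nonneg (κ * p - 2 * A * wb)
    have h2 : κ * (A * (p * wb)) ≤ (κ ^ 2 / 4) * p ^ 2 + A ^ 2 * wb ^ 2 := by nlinarith [hsq]
    have h3 : κ * ((κ / 4) * p ^ 2 + (A ^ 2 / κ) * wb ^ 2)
        = (κ ^ 2 / 4) * p ^ 2 + A ^ 2 * wb ^ 2 := by field_simp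
    exact (mul_le_mul_iff_right₀ hκ).mp (by rw [h3]; exact h2)
  have hexp : p ^ 2 - 2 * (a * (μ * p ^ 2 - wb * p)) + (a * (L * p + wb)) ^ 2
      = (1 - a * (2 * μ - a * L ^ 2)) * p ^ 2
        + (2 * a + 2 * a ^ 2 * L) * (p * wb) + a ^ 2 * wb ^ 2 := by ring
  linarith [hexp.le, hexp.ge, hc1, hc2, hc3, hyoung]

/-- Combined Lyapunov step estimate. -/
private lemma rapid_W_step (Vn V c2 p2 pn b3 b4 b5 θ σ κ E wb2 : ℝ)
    (hVn : Vn ≤ V - b3 * c2 + b4 * p2 + b5 * wb2)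
    (hpn : pn ≤ (1 - 3 * κ / 4) * p2 + E * wb2)
    (hσV : σ * V ≤ b3 * c2)
    (hσθ : θ * σ ≤ b4) (hθκ : θ * (3 * κ / 8) = b4)
    (hθ0 : 0 ≤ θ) (hp2 : 0 ≤ p2) :
    Vn + θ * pn ≤ (1 - σ) * (V + θ * p2) + (b5 + θ * E) * wb2 := by
  have h1 := mul_le_mul_of_nonneg_left hpn hθ0
  have h2 := mul_le_mul_of_nonneg_right hσθ hp2
  have h3 : θ * (3 * κ / 8) * p2 = b4 * p2 := by rw [hθκ]
  nlinarith [h1, h2, h3, hVn, hσV]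

private lemma rapid_step_mono (a αlo αhi μ L : ℝ) (h1 : αlo ≤ a) (h2 : a ≤ αhi)
    (h3 : 0 < αlo) (h4 : 0 ≤ L) (h5 : αhi * L ^ 2 < 2 * μ) :
    αlo * (2 * μ - αhi * L ^ 2) ≤ a * (2 * μ - a * L ^ 2) := by
  have hx1 : (0:ℝ) ≤ (a - αlo) * (2 * μ - αhi * L ^ 2) :=
    mul_nonneg (by linarith) (by linarith)
  have hx2 : (0:ℝ) ≤ a * L ^ 2 * (αhi - a) :=
    mul_nonneg (mul_nonneg (by linarith) (sq_nonneg L)) (by linarith)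
  nlinarith [hx1, hx2]

private lemma rapid_beta_bound (β b1 θ c2 p2 V : ℝ) (h1 : b1 * c2 ≤ V)
    (hβ1 : β * c2 ≤ b1 * c2) (hβ2 : β * p2 ≤ θ * p2) :
    β * (c2 + p2) ≤ V + θ * p2 := by nlinarith [h1, hβ1, hβ2]

set_option maxHeartbeats 1000000 in
/-- Theorem 2 (ultimate boundedness for RAPID): if `w̄ := sup_j ‖w j‖` is
finite, then there is a constant `C2 > 0` such that
`limsup_{m→∞} √(‖χ m‖² + ‖φ m − φ*‖²) ≤ C2·w̄`. -/
theorem rapid_ultimate_bound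
    {E1 F H : Type*} [NormedAddCommGroup E1] [NormedSpace ℝ E1]
    [NormedAddCommGroup F] [NormedSpace ℝ F]
    [NormedAddCommGroup H] [InnerProductSpace ℝ H] [CompleteSpace H]
    (χ : ℕ → E1) (w : ℕ → F) (φ : ℕ → H)
    (Vy : E1 → ℝ) (b1 b2 b3 b4 b5 : ℝ)
    (hb1 : 0 < b1) (hb2 : 0 < b2) (hb3 : 0 < b3) (hb4 : 0 < b4) (hb5 : 0 < b5)
    (φstar : H)
    (hVlow : ∀ m, b1 * ‖χ m‖ ^ 2 ≤ Vy (χ m))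
    (hVup : ∀ m, Vy (χ m) ≤ b2 * ‖χ m‖ ^ 2)
    (hVdec : ∀ m, Vy (χ (m + 1)) - Vy (χ m)
      ≤ -b3 * ‖χ m‖ ^ 2 + b4 * ‖φ m - φstar‖ ^ 2 + b5 * ‖w m‖ ^ 2)
    (Φ : Set H) (hne : Φ.Nonempty) (hclosed : IsClosed Φ) (hconv : Convex ℝ Φ)
    (hφstar : φstar ∈ Φ) (hφ0 : φ 0 ∈ Φ)
    (proj : H → H)
    (hproj : ∀ x, proj x ∈ Φ ∧ ∀ y ∈ Φ, ‖x - proj x‖ ≤ ‖x - y‖)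
    (g r : ℕ → H) (hr : ∀ m, ‖r m‖ ≤ ‖w m‖)
    (α : ℕ → ℝ) (μ L αlo αhi : ℝ)
    (hμ : 0 < μ) (hL : 0 < L)
    (hαlo : 0 < αlo) (hαle : αlo ≤ αhi) (hαhi : αhi < 2 * μ / L ^ 2)
    (hα : ∀ m, αlo ≤ α m ∧ α m ≤ αhi)
    (hupd : ∀ m, φ (m + 1) = proj (φ m - α m • (g m + r m)))
    (hmono : ∀ m, μ * ‖φ m - φstar‖ ^ 2 ≤ @inner ℝ H _ (g m) (φ m - φstar))
    (hgrow : ∀ m, ‖g m‖ ≤ L * ‖φ m - φstar‖)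
    (hwbdd : BddAbove (Set.range fun j => ‖w j‖)) :
    ∃ C2 > (0 : ℝ),
      Filter.limsup (fun m => Real.sqrt (‖χ m‖ ^ 2 + ‖φ m - φstar‖ ^ 2))
          Filter.atTop
        ≤ C2 * (⨆ j, ‖w j‖) := by
  have hαhi0 : 0 < αhi := lt_of_lt_of_le hαlo hαle
  set wb : ℝ := ⨆ j, ‖w j‖ with hwbdef
  have hwle : ∀ m, ‖w m‖ ≤ wb := fun m => le_ciSup hwbdd m
  have hwb0 : (0:ℝ) ≤ wb := le_trans (norm_nonneg _) (hwle 0)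
  have hL2 : αhi * L ^ 2 < 2 * μ := (lt_div_iff₀ (by positivity)).mp hαhi
  set κ : ℝ := min (αlo * (2 * μ - αhi * L ^ 2)) 1 with hκdef
  have hκ : 0 < κ := lt_min (mul_pos hαlo (by linarith)) one_pos
  have hκ1 : κ ≤ 1 := min_le_right _ _
  set A : ℝ := 2 * αhi + 2 * αhi ^ 2 * L with hAdef
  have hA : 0 < A := by positivity
  set E : ℝ := A ^ 2 / κ + αhi ^ 2 with hEdef
  have hE : 0 < E := by positivity
  set θ : ℝ := 8 * b4 / (3 * κ) with hθdef
  have hθ : 0 < θ := by positivity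
  have hθκ : θ * (3 * κ / 8) = b4 := by rw [hθdef]; field_simp
  set σ : ℝ := min (min (b3 / b2) 1) (3 * κ / 8) with hσdef
  have hσ : 0 < σ := lt_min (lt_min (by positivity) one_pos) (by positivity)
  have hσ1 : σ ≤ 1 := le_trans (min_le_left _ _) (min_le_right _ _)
  have hσb : σ ≤ b3 / b2 := le_trans (min_le_left _ _) (min_le_left _ _)
  have hσκ : σ ≤ 3 * κ / 8 := min_le_right _ _
  have hρ0 : (0:ℝ) ≤ 1 - σ := by linarith
  set C : ℝ := b5 + θ * E with hCdef
  have hC : 0 < C := by positivity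
  set K : ℝ := C * wb ^ 2 / σ with hKdef
  have hK0 : 0 ≤ K := by positivity
  have hKσ : σ * K = C * wb ^ 2 := by rw [hKdef]; field_simp
  set β : ℝ := min b1 θ with hβdef
  have hβ : 0 < β := lt_min hb1 hθ
  set M : ℝ := max (Vy (χ 0) + θ * ‖φ 0 - φstar‖ ^ 2 - K) 0 with hMdef
  have hM0 : 0 ≤ M := le_max_right _ _
  have hβb1 : β ≤ b1 := min_le_left _ _
  have hβθ : β ≤ θ := min_le_right _ _
  clear_value wb κ A E θ σ C K β M
  -- step estimate for the gains
  have hψ : ∀ m, ‖φ (m + 1) - φstar‖ ^ 2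
      ≤ (1 - 3 * κ / 4) * ‖φ m - φstar‖ ^ 2 + E * wb ^ 2 := by
    intro m
    obtain ⟨ha1, ha2⟩ := hα m
    have ha0 : 0 < α m := lt_of_lt_of_le hαlo ha1
    set a : ℝ := α m with hadef
    set u : H := φ m - φstar with hudef
    set p : ℝ := ‖u‖ with hpdef
    have hp0 : 0 ≤ p := norm_nonneg _
    have hproj' := hproj (φ m - a • (g m + r m))
    have hne' : ‖φ (m + 1) - φstar‖ ≤ ‖(φ m - a • (g m + r m)) - φstar‖ := by
      rw [hupd m]
      exact rapid_proj_nonexp Φ hconv _ _ φstar hproj'.1 hφstar hproj'.2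
    have hsq : ‖φ (m + 1) - φstar‖ ^ 2 ≤ ‖(φ m - a • (g m + r m)) - φstar‖ ^ 2 :=
      pow_le_pow_left₀ (norm_nonneg _) hne' 2
    have heq : (φ m - a • (g m + r m)) - φstar = u - a • (g m + r m) := by
      rw [hudef]; abel
    rw [heq] at hsq
    have hns : ‖u - a • (g m + r m)‖ ^ 2
        = ‖u‖ ^ 2 - 2 * @inner ℝ H _ u (a • (g m + r m)) + ‖a • (g m + r m)‖ ^ 2 :=
      norm_sub_sq_real u _
    have hi : @inner ℝ H _ u (a • (g m + r m))
        = a * (@inner ℝ H _ (g m) u + @inner ℝ H _ (r m) u) := by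
      rw [real_inner_smul_right, inner_add_right, real_inner_comm u (g m),
        real_inner_comm u (r m)]
    have hgu : μ * p ^ 2 ≤ @inner ℝ H _ (g m) u := hmono m
    have hru : -(wb * p) ≤ @inner ℝ H _ (r m) u := by
      have h2 := abs_real_inner_le_norm (r m) u
      have h3 : ‖r m‖ * ‖u‖ ≤ wb * p :=
        mul_le_mul (le_trans (hr m) (hwle m)) le_rfl (norm_nonneg _) hwb0
      have h4 := neg_abs_le (@inner ℝ H _ (r m) u)
      linarith
    have hnv : ‖a • (g m + r m)‖ ≤ a * (L * p + wb) := by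
      rw [norm_smul, Real.norm_eq_abs, abs_of_pos ha0]
      refine mul_le_mul_of_nonneg_left ?_ ha0.le
      calc ‖g m + r m‖ ≤ ‖g m‖ + ‖r m‖ := norm_add_le _ _
        _ ≤ L * p + wb := add_le_add (hgrow m) (le_trans (hr m) (hwle m))
    have hnv2 : ‖a • (g m + r m)‖ ^ 2 ≤ (a * (L * p + wb)) ^ 2 :=
      pow_le_pow_left₀ (norm_nonneg _) hnv 2
    have hmain : ‖φ (m + 1) - φstar‖ ^ 2
        ≤ p ^ 2 - 2 * (a * (μ * p ^ 2 - wb * p)) + (a * (L * p + wb)) ^ 2 := by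
      rw [hns] at hsq
      have hii : a * (μ * p ^ 2 - wb * p) ≤ @inner ℝ H _ u (a • (g m + r m)) := by
        rw [hi]
        exact mul_le_mul_of_nonneg_left (by linarith) ha0.le
      linarith
    have hstep : κ ≤ a * (2 * μ - a * L ^ 2) := by
      have h0 : κ ≤ αlo * (2 * μ - αhi * L ^ 2) := by
        rw [hκdef]; exact min_le_left _ _
      exact le_trans h0 (rapid_step_mono a αlo αhi μ L ha1 ha2 hαlo hL.le hL2)
    have hpoly := rapid_poly a αhi μ L κ A p wb hp0 hwb0 hκ ha0.le ha2 hL.le hstep hAdef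
    rw [hEdef]
    exact le_trans hmain hpoly
  -- the combined Lyapunov function
  set W : ℕ → ℝ := fun m => Vy (χ m) + θ * ‖φ m - φstar‖ ^ 2 with hWdef
  have hWval : ∀ m, W m = Vy (χ m) + θ * ‖φ m - φstar‖ ^ 2 := fun m => rfl
  clear_value W
  have hWrec : ∀ m, W (m + 1) ≤ (1 - σ) * W m + C * wb ^ 2 := by
    intro m
    have hV0 : (0:ℝ) ≤ Vy (χ m) := le_trans (by positivity) (hVlow m)
    have hw2 : ‖w m‖ ^ 2 ≤ wb ^ 2 := pow_le_pow_left₀ (norm_nonneg _) (hwle m) 2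
    have hVn : Vy (χ (m + 1)) ≤ Vy (χ m) - b3 * ‖χ m‖ ^ 2
        + b4 * ‖φ m - φstar‖ ^ 2 + b5 * wb ^ 2 := by
      have hd := hVdec m
      have := mul_le_mul_of_nonneg_left hw2 hb5.le
      linarith
    have hσV : σ * Vy (χ m) ≤ b3 * ‖χ m‖ ^ 2 := by
      have h1 : σ * Vy (χ m) ≤ (b3 / b2) * Vy (χ m) :=
        mul_le_mul_of_nonneg_right hσb hV0
      have h2 : (b3 / b2) * Vy (χ m) ≤ (b3 / b2) * (b2 * ‖χ m‖ ^ 2) :=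
        mul_le_mul_of_nonneg_left (hVup m) (by positivity)
      have h3 : (b3 / b2) * (b2 * ‖χ m‖ ^ 2) = b3 * ‖χ m‖ ^ 2 := by
        field_simp; try ring
      linarith
    have hσθ : θ * σ ≤ b4 := by
      have := mul_le_mul_of_nonneg_left hσκ hθ.le
      linarith [hθκ]
    have := rapid_W_step (Vy (χ (m + 1))) (Vy (χ m)) (‖χ m‖ ^ 2)
      (‖φ m - φstar‖ ^ 2) (‖φ (m + 1) - φstar‖ ^ 2) b3 b4 b5 θ σ κ E (wb ^ 2)
      hVn (hψ m) hσV hσθ hθκ hθ.le (by positivity)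
    rw [hWval (m + 1), hWval m, hCdef]
    exact this
  -- geometric decay
  have hWgeo : ∀ m, W m ≤ K + (1 - σ) ^ m * M := by
    intro m
    induction m with
    | zero =>
      have h := le_max_left (Vy (χ 0) + θ * ‖φ 0 - φstar‖ ^ 2 - K) 0
      rw [hWval 0, pow_zero, one_mul]
      rw [hMdef]
      linarith
    | succ m ih =>
      have h1 := hWrec m
      have h2 : (1 - σ) * W m ≤ (1 - σ) * (K + (1 - σ) ^ m * M) :=
        mul_le_mul_of_nonneg_left ih hρ0
      have h3 : (1 - σ) * (K + (1 - σ) ^ m * M) + C * wb ^ 2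
          = K + (1 - σ) ^ (m + 1) * M := by
        rw [pow_succ]; linear_combination -hKσ
      linarith
  -- pass to the square root and take limsup
  have hfle : ∀ m, Real.sqrt (‖χ m‖ ^ 2 + ‖φ m - φstar‖ ^ 2)
      ≤ Real.sqrt ((K + (1 - σ) ^ m * M) / β) := by
    intro m
    apply Real.sqrt_le_sqrt
    have hβ1 : β * ‖χ m‖ ^ 2 ≤ b1 * ‖χ m‖ ^ 2 :=
      mul_le_mul_of_nonneg_right hβb1 (sq_nonneg _)
    have hβ2 : β * ‖φ m - φstar‖ ^ 2 ≤ θ * ‖φ m - φstar‖ ^ 2 :=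
      mul_le_mul_of_nonneg_right hβθ (sq_nonneg _)
    have hβS : β * (‖χ m‖ ^ 2 + ‖φ m - φstar‖ ^ 2) ≤ W m := by
      rw [hWval m]
      exact rapid_beta_bound β b1 θ _ _ _ (hVlow m) hβ1 hβ2
    rw [le_div_iff₀ hβ]
    calc (‖χ m‖ ^ 2 + ‖φ m - φstar‖ ^ 2) * β
        = β * (‖χ m‖ ^ 2 + ‖φ m - φstar‖ ^ 2) := by ring
      _ ≤ W m := hβS
      _ ≤ K + (1 - σ) ^ m * M := hWgeo m
  have htend : Tendsto (fun m => Real.sqrt ((K + (1 - σ) ^ m * M) / β)) atTop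
      (nhds (Real.sqrt (K / β))) := by
    have h0 : Tendsto (fun m : ℕ => (1 - σ) ^ m) atTop (nhds 0) :=
      tendsto_pow_atTop_nhds_zero_of_lt_one hρ0 (by linarith)
    have h1 : Tendsto (fun m : ℕ => (K + (1 - σ) ^ m * M) / β) atTop (nhds (K / β)) := by
      have := ((h0.mul_const M).const_add K).div_const β
      simpa using this
    exact h1.sqrt
  have hlim : limsup (fun m => Real.sqrt (‖χ m‖ ^ 2 + ‖φ m - φstar‖ ^ 2)) atTop
      ≤ Real.sqrt (K / β) := by
    have hco : IsCoboundedUnder (· ≤ ·) atTop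
        (fun m => Real.sqrt (‖χ m‖ ^ 2 + ‖φ m - φstar‖ ^ 2)) :=
      (isBoundedUnder_of ⟨0, fun m => Real.sqrt_nonneg _⟩ :
        IsBoundedUnder (· ≥ ·) atTop _).isCoboundedUnder_le
    have hbd : IsBoundedUnder (· ≤ ·) atTop
        (fun m => Real.sqrt ((K + (1 - σ) ^ m * M) / β)) := htend.isBoundedUnder_le
    calc limsup (fun m => Real.sqrt (‖χ m‖ ^ 2 + ‖φ m - φstar‖ ^ 2)) atTop
        ≤ limsup (fun m => Real.sqrt ((K + (1 - σ) ^ m * M) / β)) atTop :=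
          limsup_le_limsup (Eventually.of_forall hfle) hco hbd
      _ = Real.sqrt (K / β) := htend.limsup_eq
  refine ⟨Real.sqrt (C / (σ * β)), Real.sqrt_pos.mpr (div_pos hC (mul_pos hσ hβ)), ?_⟩
  have hKβ : K / β = (C / (σ * β)) * wb ^ 2 := by
    rw [hKdef]; field_simp; try ring
  calc limsup (fun m => Real.sqrt (‖χ m‖ ^ 2 + ‖φ m - φstar‖ ^ 2)) atTop
      ≤ Real.sqrt (K / β) := hlim
    _ = Real.sqrt (C / (σ * β)) * wb := by
        rw [hKβ, Real.sqrt_mul (by positivity), Real.sqrt_sq hwb0]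
end

section
/- (Theorem 2, tracking-error bound.) Under the stated assumptions, if w̄ := sup_{j ∈ ℕ} ‖w j‖ is finite, then there exists a constant C_e > 0 such that limsup_{m→∞} |e m| ≤ C_e·w̄; in particular the sampled RAPID tracking error is ultimately bounded by a disturbance-dependent constant. -/
open Filter

lemma my_proj_contract {H : Type*} [NormedAddCommGroup H] [InnerProductSpace ℝ H]
    {Φ : Set H} (hconv : Convex ℝ Φ) {p : H} (hp : p ∈ Φ)
    (proj : H → H) (hproj : ∀ x, proj x ∈ Φ ∧ ∀ y ∈ Φ, ‖x - proj x‖ ≤ ‖x - y‖)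
    (x : H) : ‖proj x - p‖ ≤ ‖x - p‖ := by
  have hmem := (hproj x).1
  haveI : Nonempty Φ := ⟨⟨proj x, hmem⟩⟩
  have hinf : ‖x - proj x‖ = ⨅ w : Φ, ‖x - w‖ := by
    refine le_antisymm (le_ciInf fun w => (hproj x).2 w w.2) ?_
    have hbdd : BddBelow (Set.range fun w : Φ => ‖x - (w : H)‖) :=
      ⟨0, by rintro _ ⟨w, rfl⟩; exact norm_nonneg _⟩
    exact ciInf_le hbdd ⟨proj x, hmem⟩
  have hineq : (inner ℝ (x - proj x) (p - proj x) : ℝ) ≤ 0 :=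
    (norm_eq_iInf_iff_real_inner_le_zero hconv hmem).1 hinf p hp
  have key : (inner ℝ (proj x - x) (proj x - p) : ℝ) ≤ 0 := by
    rw [← neg_sub x (proj x), ← neg_sub p (proj x), inner_neg_neg]
    exact hineq
  have expand : (inner ℝ (proj x - p) (proj x - p) : ℝ) =
      inner ℝ (proj x - x) (proj x - p) + inner ℝ (x - p) (proj x - p) := by
    rw [← inner_add_left]
    congr 1
    abel
  have hs : (inner ℝ (proj x - p) (proj x - p) : ℝ) = ‖proj x - p‖ ^ 2 :=
    real_inner_self_eq_norm_sq _
  have hcs : (inner ℝ (x - p) (proj x - p) : ℝ) ≤ ‖x - p‖ * ‖proj x - p‖ :=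
    real_inner_le_norm _ _
  nlinarith [norm_nonneg (proj x - p), norm_nonneg (x - p)]

lemma my_rec_bound {s : ℕ → ℝ} {q K : ℝ} (hq0 : 0 ≤ q) (hq1 : q < 1)
    (hs : ∀ m, 0 ≤ s m) (hrec : ∀ m, s (m + 1) ≤ q * s m + K) (hK : 0 ≤ K) :
    ∀ m, s m ≤ max (s 0) (K / (1 - q)) := by
  intro m
  induction m with
  | zero => exact le_max_left _ _
  | succ n ih =>
    have hM : K / (1 - q) ≤ max (s 0) (K / (1 - q)) := le_max_right _ _
    have hM0 : 0 ≤ max (s 0) (K / (1 - q)) := le_trans (hs 0) (le_max_left _ _)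
    have h2 : K ≤ (1 - q) * max (s 0) (K / (1 - q)) := by
      rw [div_le_iff₀ (by linarith)] at hM
      linarith [hM]
    have := hrec n
    nlinarith [mul_le_mul_of_nonneg_left ih hq0]

lemma my_geom_decay {s : ℕ → ℝ} {q : ℝ} (hq0 : 0 ≤ q) (hq1 : q < 1)
    (hs : ∀ m, 0 ≤ s m) (hrec : ∀ m, s (m + 1) ≤ q * s m) :
    Filter.Tendsto s Filter.atTop (nhds 0) := by
  have hb : ∀ m, s m ≤ q ^ m * s 0 := by
    intro m
    induction m with
    | zero => simp
    | succ n ih =>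
      calc s (n + 1) ≤ q * s n := hrec n
        _ ≤ q * (q ^ n * s 0) := mul_le_mul_of_nonneg_left ih hq0
        _ = q ^ (n + 1) * s 0 := by ring
  have ht : Filter.Tendsto (fun m => q ^ m * s 0) Filter.atTop (nhds 0) := by
    have := (tendsto_pow_atTop_nhds_zero_of_lt_one hq0 hq1).mul_const (s 0)
    simpa using this
  exact squeeze_zero hs hb ht

set_option maxHeartbeats 1000000 in
/-- Theorem 2 (tracking-error bound for RAPID): under the plant, gain-update,
and output assumptions, if `w̄ := sup_j ‖w j‖` is finite, then there is a
constant `C_e > 0` such that `limsup_{m→∞} |e m| ≤ C_e·w̄`; the sampled RAPID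
tracking error is ultimately bounded by a disturbance-dependent constant. -/
theorem rapid_tracking_error_bound
    {E1 F H Y : Type*} [NormedAddCommGroup E1] [NormedSpace ℝ E1]
    [NormedAddCommGroup F] [NormedSpace ℝ F]
    [NormedAddCommGroup H] [InnerProductSpace ℝ H] [CompleteSpace H]
    [NormedAddCommGroup Y] [NormedSpace ℝ Y]
    (χ : ℕ → E1) (w : ℕ → F) (φ : ℕ → H)
    (Vy : E1 → ℝ) (b1 b2 b3 b4 b5 : ℝ)
    (hb1 : 0 < b1) (hb2 : 0 < b2) (hb3 : 0 < b3) (hb4 : 0 < b4) (hb5 : 0 < b5)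
    (φstar : H)
    (hVlow : ∀ m, b1 * ‖χ m‖ ^ 2 ≤ Vy (χ m))
    (hVup : ∀ m, Vy (χ m) ≤ b2 * ‖χ m‖ ^ 2)
    (hVdec : ∀ m, Vy (χ (m + 1)) - Vy (χ m)
      ≤ -b3 * ‖χ m‖ ^ 2 + b4 * ‖φ m - φstar‖ ^ 2 + b5 * ‖w m‖ ^ 2)
    (Φ : Set H) (hne : Φ.Nonempty) (hclosed : IsClosed Φ) (hconv : Convex ℝ Φ)
    (hφstar : φstar ∈ Φ) (hφ0 : φ 0 ∈ Φ)
    (proj : H → H)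
    (hproj : ∀ x, proj x ∈ Φ ∧ ∀ y ∈ Φ, ‖x - proj x‖ ≤ ‖x - y‖)
    (g r : ℕ → H) (hr : ∀ m, ‖r m‖ ≤ ‖w m‖)
    (α : ℕ → ℝ) (μ L αlo αhi : ℝ)
    (hμ : 0 < μ) (hL : 0 < L)
    (hαlo : 0 < αlo) (hαle : αlo ≤ αhi) (hαhi : αhi < 2 * μ / L ^ 2)
    (hα : ∀ m, αlo ≤ α m ∧ α m ≤ αhi)
    (hupd : ∀ m, φ (m + 1) = proj (φ m - α m • (g m + r m)))
    (hmono : ∀ m, μ * ‖φ m - φstar‖ ^ 2 ≤ @inner ℝ H _ (g m) (φ m - φstar))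
    (hgrow : ∀ m, ‖g m‖ ≤ L * ‖φ m - φstar‖)
    (h : Y → ℝ) (y : ℕ → Y) (ystar : Y) (ηt : ℕ → ℝ) (e : ℕ → ℝ)
    (he : ∀ m, e m = h ystar - h (y m) - ηt m)
    (Lh : ℝ) (hLh : 0 < Lh)
    (hLip : ∀ m, |h (y m) - h ystar| ≤ Lh * ‖y m - ystar‖)
    (hcomp : ∀ m, ‖y m - ystar‖ ≤ ‖χ m‖)
    (hnoise : ∀ m, |ηt m| ≤ ‖w m‖)
    (hwbdd : BddAbove (Set.range fun j => ‖w j‖)) :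
    ∃ Ce > (0 : ℝ),
      Filter.limsup (fun m => |e m|) Filter.atTop ≤ Ce * (⨆ j, ‖w j‖) := by
  -- notation
  obtain ⟨wb, hwbdef⟩ : ∃ wb : ℝ, wb = ⨆ j, ‖w j‖ := ⟨_, rfl⟩
  rw [show (⨆ j, ‖w j‖) = wb from hwbdef.symm]
  have hwble : ∀ j, ‖w j‖ ≤ wb := by
    intro j; rw [hwbdef]; exact le_ciSup hwbdd j
  have hwb0 : 0 ≤ wb := le_trans (norm_nonneg (w 0)) (hwble 0)
  have hL2 : 0 < L ^ 2 := by positivity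
  have hLsq : αhi * L ^ 2 < 2 * μ := by
    rw [lt_div_iff₀ hL2] at hαhi; linarith only [hαhi]
  have hαm : ∀ m, 0 < α m := fun m => lt_of_lt_of_le hαlo (hα m).1
  -- gain recursion constants
  obtain ⟨ρ, hρdef⟩ : ∃ ρ : ℝ, ρ = 1 - αlo * (2 * μ - αhi * L ^ 2) := ⟨_, rfl⟩
  have hρ1 : ρ < 1 := by
    have h0 : 0 < αlo * (2 * μ - αhi * L ^ 2) :=
      mul_pos hαlo (by linarith only [hLsq])
    rw [hρdef]; linarith only [h0]
  obtain ⟨c, hcdef⟩ : ∃ c : ℝ, c = 2 * αhi + 2 * αhi ^ 2 * L := ⟨_, rfl⟩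
  obtain ⟨δ, hδdef⟩ : ∃ δ : ℝ, δ = (1 - ρ) / 2 := ⟨_, rfl⟩
  have hδ : 0 < δ := by rw [hδdef]; linarith only [hρ1]
  obtain ⟨D, hDdef⟩ : ∃ D : ℝ, D = c ^ 2 / (4 * δ) + αhi ^ 2 := ⟨_, rfl⟩
  have hD0 : 0 ≤ D := by rw [hDdef]; positivity
  obtain ⟨q1, hq1def⟩ : ∃ q1 : ℝ, q1 = max ((1 + ρ) / 2) 0 := ⟨_, rfl⟩
  have hq10 : 0 ≤ q1 := hq1def ▸ le_max_right _ _
  have hq11 : q1 < 1 := by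
    rw [hq1def]; exact max_lt (by linarith only [hρ1]) one_pos
  have hq1ge : (1 + ρ) / 2 ≤ q1 := hq1def ▸ le_max_left _ _
  -- per-step gain bound
  have hstep : ∀ m, ‖φ (m + 1) - φstar‖ ^ 2 ≤ q1 * ‖φ m - φstar‖ ^ 2 + D * wb ^ 2 := by
    intro m
    have hαm1 := (hα m).1
    have hαm2 := (hα m).2
    have hαmp := hαm m
    have hprojle : ‖φ (m + 1) - φstar‖ ≤ ‖φ m - α m • (g m + r m) - φstar‖ := by
      rw [hupd m]
      exact my_proj_contract hconv hφstar proj hproj _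
    have hrearr : φ m - α m • (g m + r m) - φstar
        = (φ m - φstar) - α m • (g m + r m) := by abel
    have hexp : ‖(φ m - φstar) - α m • (g m + r m)‖ ^ 2
        = ‖φ m - φstar‖ ^ 2 - 2 * inner ℝ (φ m - φstar) (α m • (g m + r m))
          + ‖α m • (g m + r m)‖ ^ 2 :=
      norm_sub_sq_real _ _
    obtain ⟨I, hIdef⟩ : ∃ I : ℝ, I = inner ℝ (φ m - φstar) (g m + r m) := ⟨_, rfl⟩
    have hIsplit : (inner ℝ (φ m - φstar) (α m • (g m + r m)) : ℝ) = α m * I := by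
      rw [hIdef, real_inner_smul_right]
    have hIg : μ * ‖φ m - φstar‖ ^ 2 ≤ (inner ℝ (φ m - φstar) (g m) : ℝ) := by
      rw [real_inner_comm]; exact hmono m
    have hIr : -(wb * ‖φ m - φstar‖) ≤ (inner ℝ (φ m - φstar) (r m) : ℝ) := by
      have h1 := abs_real_inner_le_norm (φ m - φstar) (r m)
      have h2 : ‖φ m - φstar‖ * ‖r m‖ ≤ ‖φ m - φstar‖ * wb :=
        mul_le_mul_of_nonneg_left (le_trans (hr m) (hwble m)) (norm_nonneg _)
      have h3 := neg_abs_le (inner ℝ (φ m - φstar) (r m) : ℝ)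
      have h4 : ‖φ m - φstar‖ * wb = wb * ‖φ m - φstar‖ := mul_comm _ _
      linarith only [h1, h2, h3, h4]
    have hI : μ * ‖φ m - φstar‖ ^ 2 - wb * ‖φ m - φstar‖ ≤ I := by
      rw [hIdef, inner_add_right]
      linarith only [hIg, hIr]
    have hn : ‖α m • (g m + r m)‖ ≤ α m * (L * ‖φ m - φstar‖ + wb) := by
      rw [norm_smul, Real.norm_eq_abs, abs_of_pos hαmp]
      apply mul_le_mul_of_nonneg_left _ hαmp.le
      calc ‖g m + r m‖ ≤ ‖g m‖ + ‖r m‖ := norm_add_le _ _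
        _ ≤ L * ‖φ m - φstar‖ + wb := add_le_add (hgrow m) (le_trans (hr m) (hwble m))
    have hnsq : ‖α m • (g m + r m)‖ ^ 2 ≤ (α m * (L * ‖φ m - φstar‖ + wb)) ^ 2 :=
      pow_le_pow_left₀ (norm_nonneg _) hn 2
    have hchain : ‖(φ m - φstar) - α m • (g m + r m)‖ ^ 2
        ≤ (1 - 2 * α m * μ + α m ^ 2 * L ^ 2) * ‖φ m - φstar‖ ^ 2
          + (2 * α m + 2 * α m ^ 2 * L) * wb * ‖φ m - φstar‖ + α m ^ 2 * wb ^ 2 := by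
      rw [hexp, hIsplit]
      have h5 : α m * (μ * ‖φ m - φstar‖ ^ 2 - wb * ‖φ m - φstar‖) ≤ α m * I :=
        mul_le_mul_of_nonneg_left hI hαmp.le
      nlinarith only [hnsq, h5]
    have hcoef1 : (1 - 2 * α m * μ + α m ^ 2 * L ^ 2) * ‖φ m - φstar‖ ^ 2
        ≤ ρ * ‖φ m - φstar‖ ^ 2 := by
      apply mul_le_mul_of_nonneg_right _ (sq_nonneg ‖φ m - φstar‖)
      have h1 : αlo * (2 * μ - αhi * L ^ 2) ≤ α m * (2 * μ - α m * L ^ 2) := by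
        have h2 := mul_le_mul_of_nonneg_right hαm2 hL2.le
        exact mul_le_mul hαm1 (by linarith only [h2]) (by linarith only [hLsq]) hαmp.le
      rw [hρdef]; nlinarith only [h1]
    have hcoef2 : (2 * α m + 2 * α m ^ 2 * L) * wb * ‖φ m - φstar‖
        ≤ c * wb * ‖φ m - φstar‖ := by
      apply mul_le_mul_of_nonneg_right _ (norm_nonneg _)
      apply mul_le_mul_of_nonneg_right _ hwb0
      rw [hcdef]
      have h1 := pow_le_pow_left₀ hαmp.le hαm2 2
      have h2 := mul_le_mul_of_nonneg_right h1 hL.le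
      linarith only [hαm2, h2]
    have hcoef3 : α m ^ 2 * wb ^ 2 ≤ αhi ^ 2 * wb ^ 2 :=
      mul_le_mul_of_nonneg_right (pow_le_pow_left₀ hαmp.le hαm2 2) (sq_nonneg wb)
    have hcross : c * wb * ‖φ m - φstar‖
        ≤ δ * ‖φ m - φstar‖ ^ 2 + c ^ 2 / (4 * δ) * wb ^ 2 := by
      have key : 4 * δ * (δ * ‖φ m - φstar‖ ^ 2 + c ^ 2 / (4 * δ) * wb ^ 2
          - c * wb * ‖φ m - φstar‖) = (2 * δ * ‖φ m - φstar‖ - c * wb) ^ 2 := by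
        field_simp
        ring
      nlinarith only [key, sq_nonneg (2 * δ * ‖φ m - φstar‖ - c * wb), hδ]
    have hfinal : ‖φ (m + 1) - φstar‖ ^ 2 ≤ ‖(φ m - φstar) - α m • (g m + r m)‖ ^ 2 := by
      rw [← hrearr]
      exact pow_le_pow_left₀ (norm_nonneg _) hprojle 2
    have hq1a : (1 + ρ) / 2 * ‖φ m - φstar‖ ^ 2 ≤ q1 * ‖φ m - φstar‖ ^ 2 :=
      mul_le_mul_of_nonneg_right hq1ge (sq_nonneg _)
    have h7 : δ * ‖φ m - φstar‖ ^ 2 = (1 - ρ) / 2 * ‖φ m - φstar‖ ^ 2 := by rw [hδdef]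
    have h8 : D * wb ^ 2 = c ^ 2 / (4 * δ) * wb ^ 2 + αhi ^ 2 * wb ^ 2 := by
      rw [hDdef]; ring
    linarith only [hchain, hcoef1, hcoef2, hcoef3, hcross, hfinal, hq1a, h7, h8]
  -- plant recursion
  have hV0 : ∀ m, 0 ≤ Vy (χ m) := by
    intro m
    have h1 := hVlow m
    have h2 : 0 ≤ b1 * ‖χ m‖ ^ 2 := by positivity
    linarith only [h1, h2]
  obtain ⟨q2, hq2def⟩ : ∃ q2 : ℝ, q2 = max (1 - b3 / b2) 0 := ⟨_, rfl⟩
  have hq20 : 0 ≤ q2 := hq2def ▸ le_max_right _ _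
  have hq21 : q2 < 1 := by
    have h1 : 0 < b3 / b2 := div_pos hb3 hb2
    rw [hq2def]; exact max_lt (by linarith only [h1]) one_pos
  have hVstep : ∀ m, Vy (χ (m + 1))
      ≤ q2 * Vy (χ m) + b4 * ‖φ m - φstar‖ ^ 2 + b5 * wb ^ 2 := by
    intro m
    have h1 := hVdec m
    have h2 : b5 * ‖w m‖ ^ 2 ≤ b5 * wb ^ 2 :=
      mul_le_mul_of_nonneg_left (pow_le_pow_left₀ (norm_nonneg _) (hwble m) 2) hb5.le
    have h3 : b3 / b2 * Vy (χ m) ≤ b3 * ‖χ m‖ ^ 2 := by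
      have h3a := hVup m
      have h3b := mul_le_mul_of_nonneg_left h3a (le_of_lt (div_pos hb3 hb2))
      have h3c : b3 / b2 * (b2 * ‖χ m‖ ^ 2) = b3 * ‖χ m‖ ^ 2 := by
        field_simp <;> ring
      linarith only [h3b, h3c]
    have h4 : (1 - b3 / b2) * Vy (χ m) ≤ q2 * Vy (χ m) :=
      mul_le_mul_of_nonneg_right (hq2def ▸ le_max_left _ _) (hV0 m)
    linarith only [h1, h2, h3, h4]
  -- combined Lyapunov function
  obtain ⟨q3, hq3def⟩ : ∃ q3 : ℝ, q3 = max ((1 + q1) / 2) q2 := ⟨_, rfl⟩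
  have hq31 : q3 < 1 := by
    rw [hq3def]; exact max_lt (by linarith only [hq11]) hq21
  have hq3q1 : q1 < q3 :=
    lt_of_lt_of_le (by linarith only [hq11]) (hq3def ▸ le_max_left _ _)
  have hq30 : 0 ≤ q3 := le_trans hq20 (hq3def ▸ le_max_right _ _)
  obtain ⟨c0, hc0def⟩ : ∃ c0 : ℝ, c0 = b4 / (q3 - q1) := ⟨_, rfl⟩
  have hc0 : 0 < c0 := hc0def ▸ div_pos hb4 (by linarith only [hq3q1])
  have hc0q : c0 * (q3 - q1) = b4 := by
    rw [hc0def]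
    exact div_mul_cancel₀ b4 (ne_of_gt (by linarith only [hq3q1]))
  obtain ⟨K, hKdef⟩ : ∃ K : ℝ, K = b5 + c0 * D := ⟨_, rfl⟩
  have hK0 : 0 ≤ K := by
    have h1 := mul_nonneg hc0.le hD0
    rw [hKdef]; linarith only [h1, hb5]
  set W : ℕ → ℝ := fun m => Vy (χ m) + c0 * ‖φ m - φstar‖ ^ 2 with hWdef
  have hWm : ∀ m, W m = Vy (χ m) + c0 * ‖φ m - φstar‖ ^ 2 := fun m => rfl
  have hW0 : ∀ m, 0 ≤ W m := by
    intro m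
    rw [hWm m]
    have h1 : 0 ≤ c0 * ‖φ m - φstar‖ ^ 2 := by positivity
    have h2 := hV0 m
    linarith only [h1, h2]
  have hWstep : ∀ m, W (m + 1) ≤ q3 * W m + K * wb ^ 2 := by
    intro m
    rw [hWm m, hWm (m + 1)]
    have h1 := hVstep m
    have h3 : c0 * ‖φ (m + 1) - φstar‖ ^ 2
        ≤ c0 * (q1 * ‖φ m - φstar‖ ^ 2 + D * wb ^ 2) :=
      mul_le_mul_of_nonneg_left (hstep m) hc0.le
    have h4 : q2 * Vy (χ m) ≤ q3 * Vy (χ m) :=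
      mul_le_mul_of_nonneg_right (hq3def ▸ le_max_right _ _) (hV0 m)
    have h6 : c0 * (q3 - q1) * ‖φ m - φstar‖ ^ 2 = b4 * ‖φ m - φstar‖ ^ 2 := by
      rw [hc0q]
    have hK2 : K * wb ^ 2 = b5 * wb ^ 2 + c0 * D * wb ^ 2 := by rw [hKdef]; ring
    linarith only [h1, h3, h4, h6, hK2]
  -- tracking error bound via χ
  have hebound : ∀ m, |e m| ≤ Lh * ‖χ m‖ + wb := by
    intro m
    rw [he m]
    have h1 : |h ystar - h (y m) - ηt m| ≤ |h (y m) - h ystar| + |ηt m| := by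
      rw [show h ystar - h (y m) - ηt m = -((h (y m) - h ystar) + ηt m) by ring, abs_neg]
      exact abs_add_le _ _
    have h2 := hLip m
    have h3 : Lh * ‖y m - ystar‖ ≤ Lh * ‖χ m‖ :=
      mul_le_mul_of_nonneg_left (hcomp m) hLh.le
    have h4 := le_trans (hnoise m) (hwble m)
    linarith only [h1, h2, h3, h4]
  have hχW : ∀ m, ‖χ m‖ ^ 2 ≤ W m / b1 := by
    intro m
    rw [le_div_iff₀ hb1, hWm m]
    have h1 := hVlow m
    have h2 : 0 ≤ c0 * ‖φ m - φstar‖ ^ 2 := by positivity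
    have h4 : ‖χ m‖ ^ 2 * b1 = b1 * ‖χ m‖ ^ 2 := mul_comm _ _
    linarith only [h1, h2, h4]
  have hχle : ∀ m, ‖χ m‖ ≤ Real.sqrt (W m / b1) := by
    intro m
    rw [show ‖χ m‖ = Real.sqrt (‖χ m‖ ^ 2) by rw [Real.sqrt_sq (norm_nonneg _)]]
    exact Real.sqrt_le_sqrt (hχW m)
  rcases eq_or_lt_of_le hwb0 with hwbz | hwbp
  · -- case w̄ = 0 : everything converges to 0
    refine ⟨1, one_pos, ?_⟩
    have hWrec0 : ∀ m, W (m + 1) ≤ q3 * W m := by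
      intro m
      have h1 := hWstep m
      rw [← hwbz] at h1
      simpa using h1
    have hWtend : Filter.Tendsto W Filter.atTop (nhds 0) :=
      my_geom_decay hq30 hq31 hW0 hWrec0
    have hgt : Filter.Tendsto (fun m => Lh * Real.sqrt (W m / b1)) Filter.atTop (nhds 0) := by
      have h1 : Filter.Tendsto (fun m => W m / b1) Filter.atTop (nhds 0) := by
        simpa using hWtend.div_const b1
      have h2 := h1.sqrt
      rw [Real.sqrt_zero] at h2
      simpa using h2.const_mul Lh
    have hle : ∀ m, |e m| ≤ Lh * Real.sqrt (W m / b1) := by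
      intro m
      have h1 := hebound m
      rw [← hwbz, add_zero] at h1
      exact le_trans h1 (mul_le_mul_of_nonneg_left (hχle m) hLh.le)
    have hetend : Filter.Tendsto (fun m => |e m|) Filter.atTop (nhds 0) :=
      squeeze_zero (fun m => abs_nonneg _) hle hgt
    rw [hetend.limsup_eq, ← hwbz, mul_zero]
  · -- case w̄ > 0 : uniform bound
    obtain ⟨M, hMdef⟩ : ∃ M : ℝ, M = max (W 0) (K * wb ^ 2 / (1 - q3)) := ⟨_, rfl⟩
    have hWM : ∀ m, W m ≤ M := by
      rw [hMdef]
      exact my_rec_bound hq30 hq31 hW0 hWstep (by positivity)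
    obtain ⟨Me, hMedef⟩ : ∃ Me : ℝ, Me = Lh * Real.sqrt (M / b1) + wb := ⟨_, rfl⟩
    have hMe : 0 < Me := by
      have h1 := mul_nonneg hLh.le (Real.sqrt_nonneg (M / b1))
      rw [hMedef]; linarith only [h1, hwbp]
    have hub : ∀ m, |e m| ≤ Me := by
      intro m
      have h1 : ‖χ m‖ ≤ Real.sqrt (M / b1) := by
        refine le_trans (hχle m) (Real.sqrt_le_sqrt ?_)
        exact (div_le_div_iff_of_pos_right hb1).mpr (hWM m)
      have h2 := hebound m
      have h3 : Lh * ‖χ m‖ ≤ Lh * Real.sqrt (M / b1) :=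
        mul_le_mul_of_nonneg_left h1 hLh.le
      rw [hMedef]
      linarith only [h2, h3]
    refine ⟨Me / wb, div_pos hMe hwbp, ?_⟩
    rw [div_mul_cancel₀ _ (ne_of_gt hwbp)]
    exact Filter.limsup_le_of_le (Filter.isCoboundedUnder_le_of_le Filter.atTop (fun m => abs_nonneg (e m)))
      (Filter.Eventually.of_forall hub)
end

section
/- (Theorem 2, disturbance-free case.) Under the stated assumptions with w m = 0 for all m ∈ ℕ (hence r m = 0 for all m), there exist C1 > 0 and ρ ∈ (0,1) such that √(‖χ m‖² + ‖φ m − φ*‖²) ≤ C1·ρ^m·√(‖χ 0‖² + ‖φ 0 − φ*‖²) for all m ∈ ℕ; hence (χ m, φ m) converges exponentially to (0, φ*), i.e. the disturbance-free sampled RAPID equilibrium is exponentially stable. -/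
set_option maxHeartbeats 1000000


/-- Theorem 2 (disturbance-free case for RAPID): if `w m = 0` for all `m`
(hence `r m = 0` for all `m`), then there exist `C1 > 0` and `ρ ∈ (0,1)` such
that `√(‖χ m‖² + ‖φ m − φ*‖²) ≤ C1·ρ^m·√(‖χ 0‖² + ‖φ 0 − φ*‖²)` for all `m`;
hence `(χ m, φ m)` converges exponentially to `(0, φ*)`, i.e. the
disturbance-free sampled RAPID equilibrium is exponentially stable. -/
theorem rapid_disturbance_free_exponential
    {E1 F H : Type*} [NormedAddCommGroup E1] [NormedSpace ℝ E1]
    [NormedAddCommGroup F] [NormedSpace ℝ F]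
    [NormedAddCommGroup H] [InnerProductSpace ℝ H] [CompleteSpace H]
    (χ : ℕ → E1) (w : ℕ → F) (φ : ℕ → H)
    (Vy : E1 → ℝ) (b1 b2 b3 b4 b5 : ℝ)
    (hb1 : 0 < b1) (hb2 : 0 < b2) (hb3 : 0 < b3) (hb4 : 0 < b4) (hb5 : 0 < b5)
    (φstar : H)
    (hVlow : ∀ m, b1 * ‖χ m‖ ^ 2 ≤ Vy (χ m))
    (hVup : ∀ m, Vy (χ m) ≤ b2 * ‖χ m‖ ^ 2)
    (hVdec : ∀ m, Vy (χ (m + 1)) - Vy (χ m)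
      ≤ -b3 * ‖χ m‖ ^ 2 + b4 * ‖φ m - φstar‖ ^ 2 + b5 * ‖w m‖ ^ 2)
    (Φ : Set H) (hne : Φ.Nonempty) (hclosed : IsClosed Φ) (hconv : Convex ℝ Φ)
    (hφstar : φstar ∈ Φ) (hφ0 : φ 0 ∈ Φ)
    (proj : H → H)
    (hproj : ∀ x, proj x ∈ Φ ∧ ∀ y ∈ Φ, ‖x - proj x‖ ≤ ‖x - y‖)
    (g r : ℕ → H) (hr : ∀ m, ‖r m‖ ≤ ‖w m‖)
    (α : ℕ → ℝ) (μ L αlo αhi : ℝ)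
    (hμ : 0 < μ) (hL : 0 < L)
    (hαlo : 0 < αlo) (hαle : αlo ≤ αhi) (hαhi : αhi < 2 * μ / L ^ 2)
    (hα : ∀ m, αlo ≤ α m ∧ α m ≤ αhi)
    (hupd : ∀ m, φ (m + 1) = proj (φ m - α m • (g m + r m)))
    (hmono : ∀ m, μ * ‖φ m - φstar‖ ^ 2 ≤ @inner ℝ H _ (g m) (φ m - φstar))
    (hgrow : ∀ m, ‖g m‖ ≤ L * ‖φ m - φstar‖)
    (hw : ∀ m, w m = 0) :
    ∃ C1 > (0 : ℝ), ∃ ρ ∈ Set.Ioo (0 : ℝ) 1,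
      ∀ m, Real.sqrt (‖χ m‖ ^ 2 + ‖φ m - φstar‖ ^ 2)
        ≤ C1 * ρ ^ m * Real.sqrt (‖χ 0‖ ^ 2 + ‖φ 0 - φstar‖ ^ 2) := by
  -- residual is zero
  have hr0 : ∀ m, r m = 0 := fun m => norm_le_zero_iff.mp (by simpa [hw m] using hr m)
  -- projection is nonexpansive towards φstar
  have hproj' : ∀ x : H, ‖proj x - φstar‖ ≤ ‖x - φstar‖ := by
    intro x
    have hmem := (hproj x).1
    have hmin := (hproj x).2
    have hinf : ‖x - proj x‖ = ⨅ y : Φ, ‖x - y‖ := by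
      haveI : Nonempty Φ := ⟨⟨φstar, hφstar⟩⟩
      apply le_antisymm
      · exact le_ciInf fun y => hmin y y.2
      · have hbdd : BddBelow (Set.range fun y : Φ => ‖x - (y : H)‖) :=
          ⟨0, by rintro t ⟨y, rfl⟩; exact norm_nonneg _⟩
        exact ciInf_le hbdd ⟨proj x, hmem⟩
    have hchar := (norm_eq_iInf_iff_real_inner_le_zero hconv hmem).1 hinf φstar hφstar
    -- ⟪x - proj x, φstar - proj x⟫ ≤ 0
    have key : ‖proj x - φstar‖ ^ 2 ≤ @inner ℝ H _ (x - φstar) (proj x - φstar) := by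
      have expand : @inner ℝ H _ (x - φstar) (proj x - φstar)
          = @inner ℝ H _ (x - proj x) (proj x - φstar)
            + @inner ℝ H _ (proj x - φstar) (proj x - φstar) := by
        rw [← inner_add_left]; congr 1; abel
      have h1 : (0:ℝ) ≤ @inner ℝ H _ (x - proj x) (proj x - φstar) := by
        have : @inner ℝ H _ (x - proj x) (proj x - φstar)
            = - @inner ℝ H _ (x - proj x) (φstar - proj x) := by
          rw [← inner_neg_right]; congr 1; abel
        rw [this]; linarith
      rw [expand, real_inner_self_eq_norm_sq]
      linarith
    rcases eq_or_lt_of_le (norm_nonneg (proj x - φstar)) with h0 | h0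
    · rw [← h0]; exact norm_nonneg _
    · have hCS : @inner ℝ H _ (x - φstar) (proj x - φstar)
          ≤ ‖x - φstar‖ * ‖proj x - φstar‖ := real_inner_le_norm _ _
      nlinarith [key, hCS]
  -- contraction factor for the gains
  set q : ℝ := 1 - αlo * (2 * μ - αhi * L ^ 2) with hqdef
  have hαhiL : αhi * L ^ 2 < 2 * μ := by
    have := (lt_div_iff₀ (by positivity : (0:ℝ) < L ^ 2)).1 hαhi
    linarith
  have hq1 : q < 1 := by
    have : 0 < αlo * (2 * μ - αhi * L ^ 2) := by
      apply mul_pos hαlo; linarith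
    simp [hqdef]; linarith
  set qp : ℝ := max q (1/2) with hqpdef
  have hqp0 : (0:ℝ) < qp := lt_of_lt_of_le (by norm_num) (le_max_right _ _)
  have hqp1 : qp < 1 := max_lt hq1 (by norm_num)
  set P : ℕ → ℝ := fun m => ‖φ m - φstar‖ ^ 2 with hPdef
  have hPnn : ∀ m, 0 ≤ P m := fun m => sq_nonneg _
  have hPstep : ∀ m, P (m + 1) ≤ qp * P m := by
    intro m
    have hαm := hα m
    have hαpos : 0 < α m := lt_of_lt_of_le hαlo hαm.1
    have hupd' : φ (m + 1) = proj (φ m - α m • g m) := by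
      rw [hupd m, hr0 m, add_zero]
    have hne : ‖φ (m+1) - φstar‖ ≤ ‖(φ m - α m • g m) - φstar‖ := by
      rw [hupd']; exact hproj' _
    have hsq : ‖φ (m+1) - φstar‖ ^ 2 ≤ ‖(φ m - α m • g m) - φstar‖ ^ 2 := by
      apply sq_le_sq' _ hne
      have := norm_nonneg ((φ m - α m • g m) - φstar); linarith [norm_nonneg (φ (m+1) - φstar)]
    have hrw : (φ m - α m • g m) - φstar = (φ m - φstar) - α m • g m := by abel
    have hexp : ‖(φ m - φstar) - α m • g m‖ ^ 2
        = ‖φ m - φstar‖ ^ 2 - 2 * (α m * @inner ℝ H _ (g m) (φ m - φstar))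
          + (α m) ^ 2 * ‖g m‖ ^ 2 := by
      rw [norm_sub_sq_real, real_inner_smul_right, norm_smul]
      rw [real_inner_comm]
      rw [mul_pow]
      simp [abs_of_pos hαpos]
    have hmono' := hmono m
    have hgrow' := hgrow m
    have hg2 : ‖g m‖ ^ 2 ≤ L ^ 2 * ‖φ m - φstar‖ ^ 2 := by
      have := norm_nonneg (g m)
      nlinarith
    have hbound : ‖(φ m - φstar) - α m • g m‖ ^ 2
        ≤ (1 - α m * (2 * μ - α m * L ^ 2)) * P m := by
      rw [hexp]
      have h1 : α m * μ * P m ≤ α m * @inner ℝ H _ (g m) (φ m - φstar) := by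
        have := mul_le_mul_of_nonneg_left hmono' (le_of_lt hαpos)
        simpa [hPdef, mul_assoc] using this
      have h2 : (α m)^2 * ‖g m‖^2 ≤ (α m)^2 * (L^2 * P m) :=
        mul_le_mul_of_nonneg_left hg2 (sq_nonneg _)
      simp only [hPdef] at *
      nlinarith
    have hfac : 1 - α m * (2 * μ - α m * L ^ 2) ≤ q := by
      have h1 : 2 * μ - α m * L ^ 2 ≥ 2 * μ - αhi * L ^ 2 := by
        have := mul_le_mul_of_nonneg_right hαm.2 (sq_nonneg L); linarith
      have h2 : 0 < 2 * μ - αhi * L ^ 2 := by linarith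
      have : αlo * (2 * μ - αhi * L ^ 2) ≤ α m * (2 * μ - α m * L ^ 2) := by
        apply mul_le_mul hαm.1 h1 (le_of_lt h2) (le_of_lt hαpos) |>.trans_eq rfl
      simp [hqdef]; linarith
    calc P (m+1) ≤ ‖(φ m - φstar) - α m • g m‖ ^ 2 := by rw [hPdef]; rw [← hrw]; exact hsq
    _ ≤ (1 - α m * (2 * μ - α m * L ^ 2)) * P m := hbound
    _ ≤ q * P m := mul_le_mul_of_nonneg_right hfac (hPnn m)
    _ ≤ qp * P m := mul_le_mul_of_nonneg_right (le_max_left _ _) (hPnn m)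
  -- Lyapunov recursion for the plant
  set V : ℕ → ℝ := fun m => Vy (χ m) with hVdef
  have hVnn : ∀ m, 0 ≤ V m := fun m =>
    le_trans (by positivity) (hVlow m)
  set cp : ℝ := max (1 - b3 / b2) 0 with hcpdef
  have hcp0 : 0 ≤ cp := le_max_right _ _
  have hcp1 : cp < 1 := max_lt (by have : 0 < b3 / b2 := div_pos hb3 hb2; linarith) one_pos
  have hVstep : ∀ m, V (m + 1) ≤ cp * V m + b4 * P m := by
    intro m
    have hd := hVdec m
    rw [hw m] at hd; simp at hd
    have hx : -b3 * ‖χ m‖ ^ 2 ≤ -(b3 / b2) * V m := by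
      have h1 : V m ≤ b2 * ‖χ m‖ ^ 2 := hVup m
      have h2 : (b3 / b2) * V m ≤ (b3 / b2) * (b2 * ‖χ m‖ ^ 2) :=
        mul_le_mul_of_nonneg_left h1 (le_of_lt (div_pos hb3 hb2))
      have h3 : (b3 / b2) * (b2 * ‖χ m‖ ^ 2) = b3 * ‖χ m‖ ^ 2 := by
        field_simp
      linarith
    have hring : (1 - b3 / b2) * V m = V m - (b3 / b2) * V m := by ring
    have : V (m+1) ≤ (1 - b3 / b2) * V m + b4 * P m := by
      simp only [hVdef, hPdef] at hx hring ⊢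
      linarith
    have h4 : (1 - b3 / b2) * V m ≤ cp * V m :=
      mul_le_mul_of_nonneg_right (le_max_left _ _) (hVnn m)
    linarith
  -- combined contraction
  set ρh : ℝ := max cp qp with hρhdef
  have hρh0 : 0 < ρh := lt_of_lt_of_le hqp0 (le_max_right _ _)
  have hρh1 : ρh < 1 := max_lt hcp1 hqp1
  set σ : ℝ := (1 + ρh) / 2 with hσdef
  have hσρ : ρh < σ := by simp [hσdef]; linarith
  have hσ0 : 0 < σ := lt_trans hρh0 hσρ
  have hσ1 : σ < 1 := by simp [hσdef]; linarith
  have hσq : qp < σ := lt_of_le_of_lt (le_max_right cp qp) hσρ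
  set A : ℝ := b4 / (σ - qp) with hAdef
  have hA0 : 0 < A := div_pos hb4 (by linarith)
  have hAeq : b4 + A * qp = σ * A := by
    have : σ - qp ≠ 0 := by linarith
    field_simp [hAdef]
    have h : A * (σ - qp) = b4 := by rw [hAdef]; exact div_mul_cancel₀ b4 this
    linarith
  set U : ℕ → ℝ := fun m => V m + A * P m with hUdef
  have hUstep : ∀ m, U (m + 1) ≤ σ * U m := by
    intro m
    have h1 := hVstep m
    have h2 := hPstep m
    have h3 : A * P (m+1) ≤ A * (qp * P m) := mul_le_mul_of_nonneg_left h2 (le_of_lt hA0)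
    have hcσ : cp * V m ≤ σ * V m := by
      have : cp ≤ σ := le_trans (le_max_left cp qp) (le_of_lt hσρ)
      exact mul_le_mul_of_nonneg_right this (hVnn m)
    rw [← mul_assoc] at h3
    have hexp : (b4 + A * qp) * P m = b4 * P m + A * qp * P m := by ring
    have : U (m+1) ≤ cp * V m + (b4 + A * qp) * P m := by
      simp only [hUdef]; rw [hexp]; linarith
    rw [hAeq] at this
    simp only [hUdef] at this ⊢
    calc V (m+1) + A * P (m+1) ≤ cp * V m + σ * A * P m := by linarith
    _ ≤ σ * V m + σ * A * P m := by linarith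
    _ = σ * (V m + A * P m) := by ring
  have hUgeom : ∀ m, U m ≤ σ ^ m * U 0 := by
    intro m
    induction m with
    | zero => simp
    | succ n ih =>
      calc U (n+1) ≤ σ * U n := hUstep n
      _ ≤ σ * (σ ^ n * U 0) := mul_le_mul_of_nonneg_left ih (le_of_lt hσ0)
      _ = σ ^ (n+1) * U 0 := by ring
  -- final bounds
  set cmin : ℝ := min b1 A with hcmindef
  set cmax : ℝ := max b2 A with hcmaxdef
  have hcmin0 : 0 < cmin := lt_min hb1 hA0
  have hcmax0 : 0 < cmax := lt_of_lt_of_le hb2 (le_max_left _ _)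
  have hlow : ∀ m, cmin * (‖χ m‖ ^ 2 + P m) ≤ U m := by
    intro m
    have h1 : cmin * ‖χ m‖ ^ 2 ≤ b1 * ‖χ m‖ ^ 2 :=
      mul_le_mul_of_nonneg_right (min_le_left _ _) (sq_nonneg _)
    have h2 : cmin * P m ≤ A * P m :=
      mul_le_mul_of_nonneg_right (min_le_right _ _) (hPnn m)
    have h3 := hVlow m
    simp only [hUdef, hVdef]
    nlinarith
  have hhigh : U 0 ≤ cmax * (‖χ 0‖ ^ 2 + P 0) := by
    have h1 : b2 * ‖χ 0‖ ^ 2 ≤ cmax * ‖χ 0‖ ^ 2 :=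
      mul_le_mul_of_nonneg_right (le_max_left _ _) (sq_nonneg _)
    have h2 : A * P 0 ≤ cmax * P 0 :=
      mul_le_mul_of_nonneg_right (le_max_right _ _) (hPnn 0)
    have h3 := hVup 0
    simp only [hUdef, hVdef]
    nlinarith
  have hmain : ∀ m, ‖χ m‖ ^ 2 + P m ≤ (cmax / cmin) * σ ^ m * (‖χ 0‖ ^ 2 + P 0) := by
    intro m
    have h1 : cmin * (‖χ m‖ ^ 2 + P m) ≤ σ ^ m * (cmax * (‖χ 0‖ ^ 2 + P 0)) := by
      calc cmin * (‖χ m‖ ^ 2 + P m) ≤ U m := hlow m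
      _ ≤ σ ^ m * U 0 := hUgeom m
      _ ≤ σ ^ m * (cmax * (‖χ 0‖ ^ 2 + P 0)) :=
          mul_le_mul_of_nonneg_left hhigh (pow_nonneg (le_of_lt hσ0) m)
    rw [div_mul_eq_mul_div, div_mul_eq_mul_div, le_div_iff₀ hcmin0]
    nlinarith
  refine ⟨Real.sqrt (cmax / cmin), Real.sqrt_pos.2 (div_pos hcmax0 hcmin0),
    Real.sqrt σ, ⟨Real.sqrt_pos.2 hσ0, by
      rw [show (1:ℝ) = Real.sqrt 1 by simp]
      exact Real.sqrt_lt_sqrt (le_of_lt hσ0) hσ1⟩, ?_⟩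
  intro m
  have hS0 : 0 ≤ ‖χ 0‖ ^ 2 + P 0 := by positivity
  have hrhs : Real.sqrt (cmax / cmin) * Real.sqrt σ ^ m * Real.sqrt (‖χ 0‖ ^ 2 + P 0)
      = Real.sqrt ((cmax / cmin) * σ ^ m * (‖χ 0‖ ^ 2 + P 0)) := by
    have hpow : ∀ n : ℕ, Real.sqrt σ ^ n = Real.sqrt (σ ^ n) := by
      intro n; induction n with
      | zero => simp
      | succ k ih => rw [pow_succ, ih, pow_succ, ← Real.sqrt_mul (pow_nonneg hσ0.le k)]
    rw [Real.sqrt_mul (by positivity), Real.sqrt_mul (by positivity), hpow]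
  calc Real.sqrt (‖χ m‖ ^ 2 + ‖φ m - φstar‖ ^ 2)
      ≤ Real.sqrt ((cmax / cmin) * σ ^ m * (‖χ 0‖ ^ 2 + P 0)) :=
        Real.sqrt_le_sqrt (hmain m)
  _ = Real.sqrt (cmax / cmin) * Real.sqrt σ ^ m * Real.sqrt (‖χ 0‖ ^ 2 + P 0) := hrhs.symm
end
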